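/- arXiv:1912.08452 — 10 statements merged into one kernel-verified Lean document; each statement's English description precedes it below -/
import Mathlib

section
/- Let m ≥ 1, let A and B be positive definite m×m complex matrices, let λ ∈ [0,1], and let X be any m×m complex matrix. Then the integral Y := ∫_0^∞ exp(−x(1−λ)A⁻¹) · X · exp(−xλB⁻¹) dx converges (the integrand is Bochner integrable on (0,∞)), and Y satisfies the equation (1−λ)A⁻¹Y + λYB⁻¹ = X; moreover Y is the unique solution of this equation. -/
open MeasureTheory Matrix
open scoped ComplexOrder

attribute [local instance] Matrix.normedAddCommGroup Matrix.normedSpace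

open NormedSpace

namespace Stmt0Aux

variable {m : ℕ}

section Linfty

attribute [local instance] Matrix.linftyOpNormedAddCommGroup Matrix.linftyOpNormedSpace
  Matrix.linftyOpNormedRing Matrix.linftyOpNormedAlgebra

noncomputable local instance : CompleteSpace (Matrix (Fin m) (Fin m) ℂ) :=
  FiniteDimensional.complete ℂ _

lemma exp_comm (M : Matrix (Fin m) (Fin m) ℂ) (c : ℝ) :
    M * exp ((c : ℝ) • M) = exp ((c : ℝ) • M) * M :=
  ((Commute.refl M).smul_right c).exp_right

lemma linfty_deriv (M : Matrix (Fin m) (Fin m) ℂ) (c x : ℝ) :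
    HasDerivAt (fun y : ℝ => exp ((-(y * c) : ℝ) • M))
      ((-c) • (M * exp ((-(x * c) : ℝ) • M))) x := by
  have h1 : HasDerivAt (fun u : ℝ => exp (u • M))
      (M * exp ((-(x * c) : ℝ) • M)) (-(x * c)) := hasDerivAt_exp_smul_const' M _
  have h2 : HasDerivAt (fun y : ℝ => -(y * c)) (-c) x := by
    exact (hasDerivAt_mul_const c).neg
  have h3 := h1.scomp x h2
  exact h3

lemma linfty_derivG (P Q Z : Matrix (Fin m) (Fin m) ℂ) (c d x : ℝ) :
    HasDerivAt
      (fun y : ℝ => exp ((-(y * c) : ℝ) • P) * Z * exp ((-(y * d) : ℝ) • Q))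
      (-(c • (P * (exp ((-(x * c) : ℝ) • P) * Z * exp ((-(x * d) : ℝ) • Q)))
        + d • ((exp ((-(x * c) : ℝ) • P) * Z * exp ((-(x * d) : ℝ) • Q)) * Q))) x := by
  have h2 := ((linfty_deriv P c x).mul_const Z).mul (linfty_deriv Q d x)
  refine h2.congr_deriv ?_
  set EP := exp ((-(x * c) : ℝ) • P)
  set EQ := exp ((-(x * d) : ℝ) • Q)
  have hc : Q * EQ = EQ * Q := exp_comm Q (-(x * d))
  rw [hc]
  simp only [neg_smul, smul_mul_assoc, mul_smul_comm, mul_neg, neg_mul, neg_add, mul_assoc]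

lemma hasDerivAt_of_linfty {f : ℝ → Matrix (Fin m) (Fin m) ℂ} {f' : Matrix (Fin m) (Fin m) ℂ}
    {x : ℝ} (h : HasDerivAt f f' x) :
    HasDerivAt f f' x := by
  exact h

end Linfty

noncomputable local instance inst_s0 : CompleteSpace (Matrix (Fin m) (Fin m) ℂ) :=
  FiniteDimensional.complete ℂ _

lemma hasDerivAt_G (P Q Z : Matrix (Fin m) (Fin m) ℂ) (c d x : ℝ) :
    HasDerivAt
      (fun y : ℝ => exp ((-(y * c) : ℝ) • P) * Z * exp ((-(y * d) : ℝ) • Q))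
      (-(c • (P * (exp ((-(x * c) : ℝ) • P) * Z * exp ((-(x * d) : ℝ) • Q)))
        + d • ((exp ((-(x * c) : ℝ) • P) * Z * exp ((-(x * d) : ℝ) • Q)) * Q))) x :=
  hasDerivAt_of_linfty (linfty_derivG P Q Z c d x)

lemma continuous_G (P Q Z : Matrix (Fin m) (Fin m) ℂ) (c d : ℝ) :
    Continuous (fun y : ℝ => exp ((-(y * c) : ℝ) • P) * Z * exp ((-(y * d) : ℝ) • Q)) := by
  rw [continuous_iff_continuousAt]
  exact fun x => (hasDerivAt_G P Q Z c d x).continuousAt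

lemma exchange (P Q Z : Matrix (Fin m) (Fin m) ℂ) (a b s t : ℝ) :
    exp ((s : ℝ) • P) * (a • (P * Z) + b • (Z * Q)) * exp ((t : ℝ) • Q)
      = a • (P * (exp ((s : ℝ) • P) * Z * exp ((t : ℝ) • Q)))
        + b • ((exp ((s : ℝ) • P) * Z * exp ((t : ℝ) • Q)) * Q) := by
  set EP := exp ((s : ℝ) • P)
  set EQ := exp ((t : ℝ) • Q)
  have h1 : EP * P = P * EP := (exp_comm P s).symm
  have h2 : Q * EQ = EQ * Q := exp_comm Q t
  have e1 : EP * (P * Z) = P * (EP * Z) := by rw [← mul_assoc, h1, mul_assoc]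
  have e2 : (Z * Q) * EQ = (Z * EQ) * Q := by rw [mul_assoc, h2, mul_assoc]
  have c1 : EP * (P * Z) * EQ = P * (EP * Z * EQ) := by rw [e1, mul_assoc]
  have c2 : EP * (Z * Q) * EQ = (EP * Z * EQ) * Q := by
    rw [mul_assoc, e2, ← mul_assoc, ← mul_assoc]
  calc EP * (a • (P * Z) + b • (Z * Q)) * EQ
      = a • (EP * (P * Z) * EQ) + b • (EP * (Z * Q) * EQ) := by
        simp only [Matrix.mul_add, Matrix.add_mul, Matrix.mul_smul, Matrix.smul_mul]
    _ = a • (P * (EP * Z * EQ)) + b • ((EP * Z * EQ) * Q) := by rw [c1, c2]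

lemma norm_mul_le' (M N : Matrix (Fin m) (Fin m) ℂ) : ‖M * N‖ ≤ m * ‖M‖ * ‖N‖ := by
  rw [Matrix.norm_le_iff (by positivity)]
  intro i j
  rw [Matrix.mul_apply]
  calc ‖∑ k, M i k * N k j‖ ≤ ∑ k, ‖M i k * N k j‖ := norm_sum_le _ _
    _ ≤ ∑ _k : Fin m, ‖M‖ * ‖N‖ := by
        refine Finset.sum_le_sum fun k _ => ?_
        rw [norm_mul]
        exact mul_le_mul (Matrix.norm_entry_le_entrywise_sup_norm M)
          (Matrix.norm_entry_le_entrywise_sup_norm N) (norm_nonneg _) (norm_nonneg _)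
    _ = m * ‖M‖ * ‖N‖ := by simp [Finset.sum_const, mul_assoc]


lemma norm_exp_neg_smul_le {H : Matrix (Fin m) (Fin m) ℂ} (hH : H.PosDef) {μ t : ℝ}
    (hμ : ∀ i, μ ≤ hH.1.eigenvalues i) (ht : 0 ≤ t) :
    ‖exp ((-t : ℝ) • H)‖ ≤ Real.exp (-(t * μ)) := by
  classical
  set U : Matrix (Fin m) (Fin m) ℂ := (hH.1.eigenvectorUnitary : Matrix (Fin m) (Fin m) ℂ) with hUdef
  have hU : U * star U = 1 := mem_unitaryGroup_iff.mp hH.1.eigenvectorUnitary.2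
  have hU' : star U * U = 1 := mem_unitaryGroup_iff'.mp hH.1.eigenvectorUnitary.2
  have hUinv : U⁻¹ = star U := Matrix.inv_eq_right_inv hU
  have hisU : IsUnit U := ⟨⟨U, star U, hU, hU'⟩, rfl⟩
  have hspec : (-t : ℝ) • H
      = U * Matrix.diagonal (fun i => ((-t * hH.1.eigenvalues i : ℝ) : ℂ)) * U⁻¹ := by
    rw [hUinv]
    conv_lhs => rw [hH.1.spectral_theorem, Unitary.conjStarAlgAut_apply]
    rw [← Matrix.smul_mul, ← Matrix.mul_smul]
    congr 2
    rw [← Matrix.diagonal_smul]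
    congr 1
    funext i
    simp [Function.comp, Complex.real_smul, Complex.ofReal_mul, Matrix.diagonal,
      Pi.smul_apply, Pi.neg_apply]
  rw [hspec, Matrix.exp_conj U _ hisU, Matrix.exp_diagonal, hUinv, Pi.exp_def]
  -- row norms
  have hrow : ∀ i, ∑ k, ‖U i k‖ ^ 2 = 1 := by
    intro i
    have h1 : (U * star U) i i = 1 := by rw [hU]; simp [Matrix.one_apply]
    rw [Matrix.mul_apply] at h1
    have h2 : ∀ k ∈ Finset.univ, U i k * (star U) k i = ((‖U i k‖ ^ 2 : ℝ) : ℂ) := by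
      intro k _
      rw [Matrix.star_apply, Complex.star_def, Complex.mul_conj, Complex.normSq_eq_norm_sq]
    rw [Finset.sum_congr rfl h2, ← Complex.ofReal_sum] at h1
    exact_mod_cast h1
  rw [Matrix.norm_le_iff (Real.exp_nonneg _)]
  intro i j
  have hentry : (U * Matrix.diagonal (fun k => exp ((-t * hH.1.eigenvalues k : ℝ) : ℂ)) * star U) i j
      = ∑ k, (U i k * exp ((-t * hH.1.eigenvalues k : ℝ) : ℂ)) * star (U j k) := by
    simp [Matrix.mul_apply, Matrix.diagonal_apply, Matrix.star_apply, mul_ite, mul_zero,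
      ite_mul, zero_mul, Finset.sum_ite_eq, Finset.sum_ite_eq']
  rw [hentry]
  have hterm : ∀ k ∈ Finset.univ,
      ‖(U i k * exp ((-t * hH.1.eigenvalues k : ℝ) : ℂ)) * star (U j k)‖
        ≤ Real.exp (-(t * μ)) * (‖U i k‖ * ‖U j k‖) := by
    intro k _
    rw [norm_mul, norm_mul, norm_star]
    have hexp : ‖exp ((-t * hH.1.eigenvalues k : ℝ) : ℂ)‖ ≤ Real.exp (-(t * μ)) := by
      rw [← Complex.exp_eq_exp_ℂ, Complex.norm_exp, Complex.ofReal_re]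
      exact Real.exp_le_exp.mpr (by nlinarith [hμ k])
    have h1 : ‖U i k‖ * ‖exp ((-t * hH.1.eigenvalues k : ℝ) : ℂ)‖ * ‖U j k‖
        ≤ ‖U i k‖ * Real.exp (-(t * μ)) * ‖U j k‖ := by
      have := mul_le_mul_of_nonneg_left hexp (norm_nonneg (U i k))
      exact mul_le_mul_of_nonneg_right this (norm_nonneg (U j k))
    calc ‖U i k‖ * ‖exp ((-t * hH.1.eigenvalues k : ℝ) : ℂ)‖ * ‖U j k‖
        ≤ ‖U i k‖ * Real.exp (-(t * μ)) * ‖U j k‖ := h1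
      _ = Real.exp (-(t * μ)) * (‖U i k‖ * ‖U j k‖) := by ring
  have hCS : (∑ k, ‖U i k‖ * ‖U j k‖) ≤ 1 := by
    have h1 := Finset.sum_mul_sq_le_sq_mul_sq Finset.univ (fun k => ‖U i k‖) (fun k => ‖U j k‖)
    rw [hrow i, hrow j] at h1
    have h2 : (0:ℝ) ≤ ∑ k, ‖U i k‖ * ‖U j k‖ :=
      Finset.sum_nonneg fun k _ => mul_nonneg (norm_nonneg _) (norm_nonneg _)
    nlinarith
  calc ‖∑ k, (U i k * exp ((-t * hH.1.eigenvalues k : ℝ) : ℂ)) * star (U j k)‖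
      ≤ ∑ k, ‖(U i k * exp ((-t * hH.1.eigenvalues k : ℝ) : ℂ)) * star (U j k)‖ :=
        norm_sum_le _ _
    _ ≤ ∑ k, Real.exp (-(t * μ)) * (‖U i k‖ * ‖U j k‖) := Finset.sum_le_sum hterm
    _ = Real.exp (-(t * μ)) * ∑ k, ‖U i k‖ * ‖U j k‖ := by rw [Finset.mul_sum]
    _ ≤ Real.exp (-(t * μ)) * 1 := by
        exact mul_le_mul_of_nonneg_left hCS (Real.exp_nonneg _)
    _ = Real.exp (-(t * μ)) := mul_one _

lemma key (hm : 1 ≤ m) {P Q : Matrix (Fin m) (Fin m) ℂ} (hP : P.PosDef) (hQ : Q.PosDef)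
    {lam : ℝ} (h0 : 0 ≤ lam) (h1 : lam ≤ 1) :
    (∀ W : Matrix (Fin m) (Fin m) ℂ,
      @IntegrableOn _ _ _ _ SeminormedAddGroup.toContinuousENorm (fun x : ℝ => exp ((-(x * (1 - lam)) : ℝ) • P) * W *
        exp ((-(x * lam) : ℝ) • Q)) (Set.Ioi 0) volume) ∧
    (∀ Z : Matrix (Fin m) (Fin m) ℂ,
      (∫ x in Set.Ioi (0:ℝ), exp ((-(x * (1 - lam)) : ℝ) • P) *
        ((1 - lam) • (P * Z) + lam • (Z * Q)) * exp ((-(x * lam) : ℝ) • Q)) = Z) := by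
  haveI : Nonempty (Fin m) := Fin.pos_iff_nonempty.mp hm
  set μP := Finset.univ.inf' Finset.univ_nonempty hP.1.eigenvalues with hμPdef
  set μQ := Finset.univ.inf' Finset.univ_nonempty hQ.1.eigenvalues with hμQdef
  have hμP : ∀ i, μP ≤ hP.1.eigenvalues i := fun i => Finset.inf'_le _ (Finset.mem_univ i)
  have hμQ : ∀ i, μQ ≤ hQ.1.eigenvalues i := fun i => Finset.inf'_le _ (Finset.mem_univ i)
  have hμPpos : 0 < μP := by
    rw [hμPdef, Finset.lt_inf'_iff]
    exact fun i _ => hP.eigenvalues_pos i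
  have hμQpos : 0 < μQ := by
    rw [hμQdef, Finset.lt_inf'_iff]
    exact fun i _ => hQ.eigenvalues_pos i
  set ε := (1 - lam) * μP + lam * μQ with hεdef
  have hε : 0 < ε := by
    rcases eq_or_lt_of_le h0 with h | h
    · rw [hεdef, ← h]; simpa using hμPpos
    · have h2 : 0 ≤ (1 - lam) * μP := mul_nonneg (by linarith) hμPpos.le
      have h3 : 0 < lam * μQ := mul_pos h hμQpos
      rw [hεdef]; linarith
  have hbound : ∀ (W : Matrix (Fin m) (Fin m) ℂ), ∀ x ∈ Set.Ioi (0:ℝ),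
      ‖exp ((-(x * (1 - lam)) : ℝ) • P) * W * exp ((-(x * lam) : ℝ) • Q)‖
        ≤ ((m : ℝ) * m * ‖W‖) * Real.exp (-ε * x) := by
    intro W x hx
    have hx0 : (0:ℝ) ≤ x := le_of_lt hx
    have e1 : ‖exp ((-(x * (1 - lam)) : ℝ) • P)‖ ≤ Real.exp (-(x * (1 - lam) * μP)) :=
      norm_exp_neg_smul_le hP hμP (t := x * (1 - lam)) (by nlinarith)
    have e2 : ‖exp ((-(x * lam) : ℝ) • Q)‖ ≤ Real.exp (-(x * lam * μQ)) :=
      norm_exp_neg_smul_le hQ hμQ (t := x * lam) (by nlinarith)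
    set EP := exp ((-(x * (1 - lam)) : ℝ) • P)
    set EQ := exp ((-(x * lam) : ℝ) • Q)
    have hm0 : (0:ℝ) ≤ (m : ℝ) := by positivity
    calc ‖EP * W * EQ‖ ≤ (m : ℝ) * ‖EP * W‖ * ‖EQ‖ := norm_mul_le' _ _
      _ ≤ (m : ℝ) * ((m : ℝ) * ‖EP‖ * ‖W‖) * ‖EQ‖ := by
          have h4 := norm_mul_le' EP W
          have h5 : (m : ℝ) * ‖EP * W‖ ≤ (m : ℝ) * ((m : ℝ) * ‖EP‖ * ‖W‖) :=
            mul_le_mul_of_nonneg_left h4 hm0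
          exact mul_le_mul_of_nonneg_right h5 (norm_nonneg _)
      _ = ((m : ℝ) * m * ‖W‖) * (‖EP‖ * ‖EQ‖) := by ring
      _ ≤ ((m : ℝ) * m * ‖W‖) * (Real.exp (-(x * (1 - lam) * μP)) * Real.exp (-(x * lam * μQ))) := by
          have h6 := mul_le_mul e1 e2 (norm_nonneg _) (Real.exp_nonneg _)
          exact mul_le_mul_of_nonneg_left h6 (by positivity)
      _ = ((m : ℝ) * m * ‖W‖) * Real.exp (-ε * x) := by
          rw [← Real.exp_add]; congr 1; rw [hεdef]; ring
  have hint : ∀ W : Matrix (Fin m) (Fin m) ℂ,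
      @IntegrableOn _ _ _ _ SeminormedAddGroup.toContinuousENorm (fun x : ℝ => exp ((-(x * (1 - lam)) : ℝ) • P) * W *
        exp ((-(x * lam) : ℝ) • Q)) (Set.Ioi 0) volume := by
    intro W
    haveI : TopologicalSpace.PseudoMetrizableSpace (Matrix (Fin m) (Fin m) ℂ) :=
      inferInstanceAs (TopologicalSpace.PseudoMetrizableSpace (Fin m → Fin m → ℂ))
    refine Integrable.mono' ((exp_neg_integrableOn_Ioi 0 hε).const_mul ((m : ℝ) * m * ‖W‖))
      ((continuous_G P Q W (1 - lam) lam).aestronglyMeasurable.restrict) ?_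
    exact (ae_restrict_iff' measurableSet_Ioi).2 (Filter.Eventually.of_forall (hbound W))
  refine ⟨hint, ?_⟩
  intro Z
  set TZ := (1 - lam) • (P * Z) + lam • (Z * Q) with hTZ
  have hderiv : ∀ x ∈ Set.Ioi (0:ℝ),
      HasDerivAt (fun y : ℝ => exp ((-(y * (1 - lam)) : ℝ) • P) * Z *
          exp ((-(y * lam) : ℝ) • Q))
        (-(exp ((-(x * (1 - lam)) : ℝ) • P) * TZ * exp ((-(x * lam) : ℝ) • Q))) x := by
    intro x _
    have h := hasDerivAt_G P Q Z (1 - lam) lam x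
    rw [hTZ, exchange P Q Z (1 - lam) lam (-(x * (1 - lam))) (-(x * lam))]
    exact h
  have hcont : ContinuousWithinAt (fun y : ℝ => exp ((-(y * (1 - lam)) : ℝ) • P) * Z *
      exp ((-(y * lam) : ℝ) • Q)) (Set.Ici 0) 0 :=
    (continuous_G P Q Z (1 - lam) lam).continuousWithinAt
  have hfint : @IntegrableOn _ _ _ _ SeminormedAddGroup.toContinuousENorm (fun x : ℝ =>
      -(exp ((-(x * (1 - lam)) : ℝ) • P) * TZ * exp ((-(x * lam) : ℝ) • Q)))
      (Set.Ioi 0) volume := (hint TZ).neg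
  have htend : Filter.Tendsto (fun y : ℝ => exp ((-(y * (1 - lam)) : ℝ) • P) * Z *
      exp ((-(y * lam) : ℝ) • Q)) Filter.atTop (nhds 0) := by
    have hb : ∀ᶠ x in Filter.atTop,
        ‖exp ((-(x * (1 - lam)) : ℝ) • P) * Z * exp ((-(x * lam) : ℝ) • Q)‖
          ≤ ((m : ℝ) * m * ‖Z‖) * Real.exp (-ε * x) := by
      filter_upwards [Filter.eventually_gt_atTop 0] with x hx
      exact hbound Z x hx
    have h1 : Filter.Tendsto (fun x : ℝ => ε * x) Filter.atTop Filter.atTop :=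
      Filter.Tendsto.const_mul_atTop hε Filter.tendsto_id
    have h2 : Filter.Tendsto (fun x : ℝ => -ε * x) Filter.atTop Filter.atBot := by
      simpa [neg_mul] using h1
    have h3 := Real.tendsto_exp_atBot.comp h2
    have h4 : Filter.Tendsto (fun x : ℝ => ((m : ℝ) * m * ‖Z‖) * Real.exp (-ε * x))
        Filter.atTop (nhds 0) := by
      simpa using h3.const_mul ((m : ℝ) * m * ‖Z‖)
    exact squeeze_zero_norm' hb h4
  have hFTC := integral_Ioi_of_hasDerivAt_of_tendsto hcont hderiv hfint htend
  rw [integral_neg] at hFTC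
  have hf0 : exp ((-((0:ℝ) * (1 - lam)) : ℝ) • P) * Z * exp ((-((0:ℝ) * lam) : ℝ) • Q) = Z := by
    norm_num
  rw [hf0] at hFTC
  have : (0 : Matrix (Fin m) (Fin m) ℂ) - Z = -Z := by abel
  rw [this] at hFTC
  exact neg_injective hFTC

noncomputable def mulLeftCLM (P : Matrix (Fin m) (Fin m) ℂ) :
    Matrix (Fin m) (Fin m) ℂ →L[ℂ] Matrix (Fin m) (Fin m) ℂ :=
  { LinearMap.mulLeft ℂ P with
    cont := by exact continuous_const.matrix_mul continuous_id }

noncomputable def mulRightCLM (Q : Matrix (Fin m) (Fin m) ℂ) :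
    Matrix (Fin m) (Fin m) ℂ →L[ℂ] Matrix (Fin m) (Fin m) ℂ :=
  { LinearMap.mulRight ℂ Q with
    cont := by exact continuous_id.matrix_mul continuous_const }

@[simp] lemma mulLeftCLM_apply (P M : Matrix (Fin m) (Fin m) ℂ) : mulLeftCLM P M = P * M := rfl

@[simp] lemma mulRightCLM_apply (Q M : Matrix (Fin m) (Fin m) ℂ) : mulRightCLM Q M = M * Q := rfl

end Stmt0Aux

set_option maxHeartbeats 1000000

/-- For positive definite `A B : Matrix (Fin m) (Fin m) ℂ`, `λ ∈ [0,1]`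
and any `X`, the integral `Y = ∫_0^∞ exp(−x(1−λ)A⁻¹) X exp(−xλB⁻¹) dx` converges
(Bochner integrability on `(0,∞)`), satisfies `(1−λ)A⁻¹Y + λYB⁻¹ = X`, and is the
unique solution of this equation. -/
theorem stmt_0 (m : ℕ) (hm : 1 ≤ m) (A B : Matrix (Fin m) (Fin m) ℂ)
    (hA : A.PosDef) (hB : B.PosDef) (lam : ℝ) (hlam : lam ∈ Set.Icc (0 : ℝ) 1)
    (X : Matrix (Fin m) (Fin m) ℂ) :
    @IntegrableOn _ _ _ _ SeminormedAddGroup.toContinuousENorm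
      (fun x : ℝ =>
        NormedSpace.exp ((-(x * (1 - lam)) : ℝ) • A⁻¹) * X *
          NormedSpace.exp ((-(x * lam) : ℝ) • B⁻¹))
      (Set.Ioi (0 : ℝ)) volume ∧
    (((1 - lam : ℝ) : ℂ) •
        (A⁻¹ * ∫ x in Set.Ioi (0 : ℝ),
          NormedSpace.exp ((-(x * (1 - lam)) : ℝ) • A⁻¹) * X *
            NormedSpace.exp ((-(x * lam) : ℝ) • B⁻¹)) +
      ((lam : ℝ) : ℂ) •
        ((∫ x in Set.Ioi (0 : ℝ),
          NormedSpace.exp ((-(x * (1 - lam)) : ℝ) • A⁻¹) * X *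
            NormedSpace.exp ((-(x * lam) : ℝ) • B⁻¹)) * B⁻¹) = X) ∧
    ∀ Z : Matrix (Fin m) (Fin m) ℂ,
      ((1 - lam : ℝ) : ℂ) • (A⁻¹ * Z) + ((lam : ℝ) : ℂ) • (Z * B⁻¹) = X →
      Z = ∫ x in Set.Ioi (0 : ℝ),
            NormedSpace.exp ((-(x * (1 - lam)) : ℝ) • A⁻¹) * X *
              NormedSpace.exp ((-(x * lam) : ℝ) • B⁻¹) := by
  have hAi : (A⁻¹).PosDef := Matrix.posDef_inv_iff.mpr hA
  have hBi : (B⁻¹).PosDef := Matrix.posDef_inv_iff.mpr hB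
  obtain ⟨hint, hsol⟩ := Stmt0Aux.key hm hAi hBi hlam.1 hlam.2
  have hcast : ∀ (r : ℝ) (M : Matrix (Fin m) (Fin m) ℂ), ((r : ℝ) : ℂ) • M = r • M :=
    fun r M => rfl
  refine ⟨hint X, ?_, ?_⟩
  · simp only [hcast]
    have hL : A⁻¹ * (∫ x in Set.Ioi (0 : ℝ),
          NormedSpace.exp ((-(x * (1 - lam)) : ℝ) • A⁻¹) * X *
            NormedSpace.exp ((-(x * lam) : ℝ) • B⁻¹))
        = ∫ x in Set.Ioi (0 : ℝ), A⁻¹ *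
            (NormedSpace.exp ((-(x * (1 - lam)) : ℝ) • A⁻¹) * X *
              NormedSpace.exp ((-(x * lam) : ℝ) • B⁻¹)) := by
      have h := ContinuousLinearMap.integral_comp_comm
        (Stmt0Aux.mulLeftCLM A⁻¹) (hint X)
      exact h.symm
    have hR : (∫ x in Set.Ioi (0 : ℝ),
          NormedSpace.exp ((-(x * (1 - lam)) : ℝ) • A⁻¹) * X *
            NormedSpace.exp ((-(x * lam) : ℝ) • B⁻¹)) * B⁻¹
        = ∫ x in Set.Ioi (0 : ℝ),
            (NormedSpace.exp ((-(x * (1 - lam)) : ℝ) • A⁻¹) * X *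
              NormedSpace.exp ((-(x * lam) : ℝ) • B⁻¹)) * B⁻¹ := by
      have h := ContinuousLinearMap.integral_comp_comm
        (Stmt0Aux.mulRightCLM B⁻¹) (hint X)
      exact h.symm
    rw [hL, hR, ← integral_smul, ← integral_smul]
    have i1 : @Integrable _ _ SeminormedAddGroup.toContinuousENorm _ _ (fun x : ℝ => (1 - lam) •
        (A⁻¹ * (NormedSpace.exp ((-(x * (1 - lam)) : ℝ) • A⁻¹) * X *
          NormedSpace.exp ((-(x * lam) : ℝ) • B⁻¹))))
        (MeasureTheory.volume.restrict (Set.Ioi 0)) := by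
      have j1 : @Integrable _ _ SeminormedAddGroup.toContinuousENorm _ _ (fun x : ℝ => A⁻¹ *
          (NormedSpace.exp ((-(x * (1 - lam)) : ℝ) • A⁻¹) * X *
            NormedSpace.exp ((-(x * lam) : ℝ) • B⁻¹)))
          (MeasureTheory.volume.restrict (Set.Ioi 0)) := by
        exact ContinuousLinearMap.integrable_comp (Stmt0Aux.mulLeftCLM A⁻¹) (hint X)
      exact Integrable.smul (𝕜 := ℝ) (1 - lam) j1
    have i2 : @Integrable _ _ SeminormedAddGroup.toContinuousENorm _ _ (fun x : ℝ => lam •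
        ((NormedSpace.exp ((-(x * (1 - lam)) : ℝ) • A⁻¹) * X *
          NormedSpace.exp ((-(x * lam) : ℝ) • B⁻¹)) * B⁻¹))
        (MeasureTheory.volume.restrict (Set.Ioi 0)) := by
      have j2 : @Integrable _ _ SeminormedAddGroup.toContinuousENorm _ _ (fun x : ℝ =>
          (NormedSpace.exp ((-(x * (1 - lam)) : ℝ) • A⁻¹) * X *
            NormedSpace.exp ((-(x * lam) : ℝ) • B⁻¹)) * B⁻¹)
          (MeasureTheory.volume.restrict (Set.Ioi 0)) := by
        exact ContinuousLinearMap.integrable_comp (Stmt0Aux.mulRightCLM B⁻¹) (hint X)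
      exact Integrable.smul (𝕜 := ℝ) lam j2
    rw [← integral_add i1 i2]
    have hfe : ∀ x : ℝ, (1 - lam) •
        (A⁻¹ * (NormedSpace.exp ((-(x * (1 - lam)) : ℝ) • A⁻¹) * X *
          NormedSpace.exp ((-(x * lam) : ℝ) • B⁻¹))) + lam •
        ((NormedSpace.exp ((-(x * (1 - lam)) : ℝ) • A⁻¹) * X *
          NormedSpace.exp ((-(x * lam) : ℝ) • B⁻¹)) * B⁻¹)
        = NormedSpace.exp ((-(x * (1 - lam)) : ℝ) • A⁻¹) *
            ((1 - lam) • (A⁻¹ * X) + lam • (X * B⁻¹)) *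
            NormedSpace.exp ((-(x * lam) : ℝ) • B⁻¹) :=
      fun x => (Stmt0Aux.exchange A⁻¹ B⁻¹ X (1 - lam) lam (-(x * (1 - lam))) (-(x * lam))).symm
    simp only [hfe]
    exact hsol X
  · intro Z hZ
    simp only [hcast] at hZ
    have h := hsol Z
    rw [hZ] at h
    exact h.symm
end

section
/- Let m ≥ 1 and let A, B be positive definite m×m complex matrices with spectral decompositions A = Σ_{i=1}^{k} s_i E_i and B = Σ_{j=1}^{l} t_j F_j, where s_i, t_j > 0, the E_i (resp. F_j) are Hermitian idempotent matrices (orthogonal projections) satisfying E_iE_{i'} = 0 for i ≠ i', F_jF_{j'} = 0 for j ≠ j', Σ_i E_i = I and Σ_j F_j = I. Let μ be a probability measure on [0,1]. Then for every m×m complex matrix X, ∫_{[0,1]} ( ∫_0^∞ exp(−x(1−λ)A⁻¹) · X · exp(−xλB⁻¹) dx ) dμ(λ) = Σ_{i=1}^{k} Σ_{j=1}^{l} P_μ(s_i, t_j) E_i X F_j, where P_μ(s,t) := ∫_{[0,1]} ((1−λ)s⁻¹ + λt⁻¹)⁻¹ dμ(λ) for s,t > 0. -/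
open MeasureTheory Matrix
open scoped ComplexOrder

attribute [local instance] Matrix.normedAddCommGroup Matrix.normedSpace

noncomputable instance (m : ℕ) : ContinuousENorm (Matrix (Fin m) (Fin m) ℂ) := SeminormedAddGroup.toContinuousENorm

section aux
variable {m k : ℕ}

lemma sum_smul_mul_sum_smul (E : Fin k → Matrix (Fin m) (Fin m) ℂ)
    (hidem : ∀ i, E i * E i = E i)
    (horth : ∀ i i', i ≠ i' → E i * E i' = 0)
    (a b : Fin k → ℂ) :
    (∑ i, a i • E i) * (∑ i, b i • E i) = ∑ i, (a i * b i) • E i := by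
  rw [Finset.sum_mul_sum]
  refine Finset.sum_congr rfl fun i _ => ?_
  rw [Finset.sum_eq_single i]
  · rw [smul_mul_smul_comm, hidem i]
  · intro i' _ hne
    rw [smul_mul_smul_comm, horth i i' (Ne.symm hne), smul_zero]
  · simp

lemma exp_sum_smul_proj (E : Fin k → Matrix (Fin m) (Fin m) ℂ)
    (hidem : ∀ i, E i * E i = E i)
    (horth : ∀ i i', i ≠ i' → E i * E i' = 0)
    (hsum : ∑ i, E i = 1) (c : Fin k → ℂ) :
    NormedSpace.exp (∑ i, c i • E i) = ∑ i, Complex.exp (c i) • E i := by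
  have hpow : ∀ n : ℕ, (∑ i, c i • E i) ^ n = ∑ i, (c i ^ n) • E i := by
    intro n
    induction n with
    | zero => simpa using hsum.symm
    | succ n ih =>
      rw [pow_succ, ih, sum_smul_mul_sum_smul E hidem horth]
      simp [pow_succ]
  rw [NormedSpace.exp_eq_tsum ℂ]
  simp only [hpow, Finset.smul_sum, smul_smul]
  rw [Summable.tsum_finsetSum (fun i _ => ((NormedSpace.expSeries_summable' (𝕂 := ℂ) (c i)).smul_const (E i)).congr
    (fun n => by rw [smul_eq_mul]))]
  refine Finset.sum_congr rfl fun i _ => ?_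
  rw [Summable.tsum_smul_const ((NormedSpace.expSeries_summable' (𝕂 := ℂ) (c i)).congr (fun n => smul_eq_mul ..))]
  congr 1
  rw [Complex.exp_eq_exp_ℂ, NormedSpace.exp_eq_tsum ℂ]
  simp [smul_eq_mul]

end aux

section aux2
variable {m k l : ℕ}

lemma triple_sum_mul (E : Fin k → Matrix (Fin m) (Fin m) ℂ)
    (F : Fin l → Matrix (Fin m) (Fin m) ℂ) (X : Matrix (Fin m) (Fin m) ℂ)
    (e : Fin k → ℂ) (f : Fin l → ℂ) :
    (∑ i, e i • E i) * X * (∑ j, f j • F j)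
      = ∑ i, ∑ j, (e i * f j) • (E i * X * F j) := by
  rw [Finset.sum_mul, Finset.sum_mul]
  refine Finset.sum_congr rfl fun i _ => ?_
  rw [Finset.mul_sum]
  refine Finset.sum_congr rfl fun j _ => ?_
  rw [smul_mul_assoc, smul_mul_assoc, mul_smul_comm, smul_smul]

lemma integral_exp_neg_mul_Ioi {b : ℝ} (hb : 0 < b) :
    ∫ x in Set.Ioi (0:ℝ), Real.exp (-(b * x)) = b⁻¹ := by
  have := MeasureTheory.integral_comp_mul_left_Ioi (fun y => Real.exp (-y)) 0 hb
  simp only [mul_zero] at this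
  rw [this, integral_exp_neg_Ioi_zero, smul_eq_mul, mul_one]

lemma denom_pos {s t lam : ℝ} (hs : 0 < s) (ht : 0 < t) (h0 : 0 ≤ lam) (h1 : lam ≤ 1) :
    0 < (1 - lam) * s⁻¹ + lam * t⁻¹ := by
  have hs' := inv_pos.mpr hs
  have ht' := inv_pos.mpr ht
  rcases lt_or_eq_of_le h1 with h | h
  · have : 0 < (1 - lam) * s⁻¹ := mul_pos (by linarith) hs'
    nlinarith [mul_nonneg h0 ht'.le]
  · have : 0 < lam * t⁻¹ := by subst h; simpa using ht'
    nlinarith [mul_nonneg (by linarith : (0:ℝ) ≤ 1 - lam) hs'.le]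

end aux2

/-- For positive definite matrices `A = Σᵢ sᵢ Eᵢ`, `B = Σⱼ tⱼ Fⱼ`
(spectral decompositions) and a probability measure `μ` on `[0,1]`,
`∫_{[0,1]} (∫_0^∞ exp(−x(1−λ)A⁻¹) X exp(−xλB⁻¹) dx) dμ(λ)
  = Σᵢⱼ P_μ(sᵢ,tⱼ) Eᵢ X Fⱼ`, where `P_μ(s,t) = ∫_{[0,1]} ((1−λ)s⁻¹+λt⁻¹)⁻¹ dμ(λ)`. -/
theorem stmt_1 (m : ℕ) (hm : 1 ≤ m) (A B : Matrix (Fin m) (Fin m) ℂ)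
    (hA : A.PosDef) (hB : B.PosDef)
    (k l : ℕ) (s : Fin k → ℝ) (t : Fin l → ℝ)
    (hs : ∀ i, 0 < s i) (ht : ∀ j, 0 < t j)
    (E : Fin k → Matrix (Fin m) (Fin m) ℂ) (F : Fin l → Matrix (Fin m) (Fin m) ℂ)
    (hEherm : ∀ i, (E i).IsHermitian) (hFherm : ∀ j, (F j).IsHermitian)
    (hEidem : ∀ i, E i * E i = E i) (hFidem : ∀ j, F j * F j = F j)
    (hEorth : ∀ i i', i ≠ i' → E i * E i' = 0)
    (hForth : ∀ j j', j ≠ j' → F j * F j' = 0)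
    (hEsum : ∑ i, E i = 1) (hFsum : ∑ j, F j = 1)
    (hAdec : A = ∑ i, (s i : ℂ) • E i) (hBdec : B = ∑ j, (t j : ℂ) • F j)
    (μ : Measure ℝ) [IsProbabilityMeasure μ] (hμ : μ (Set.Icc (0 : ℝ) 1) = 1)
    (X : Matrix (Fin m) (Fin m) ℂ) :
    (∫ lam in Set.Icc (0 : ℝ) 1,
        (∫ x in Set.Ioi (0 : ℝ),
          NormedSpace.exp ((-(x * (1 - lam)) : ℝ) • A⁻¹) * X *
            NormedSpace.exp ((-(x * lam) : ℝ) • B⁻¹)) ∂μ) =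
      ∑ i, ∑ j,
        ((∫ lam in Set.Icc (0 : ℝ) 1,
            ((1 - lam) * (s i)⁻¹ + lam * (t j)⁻¹)⁻¹ ∂μ : ℝ) : ℂ) • (E i * X * F j) := by
  have hAinv : A⁻¹ = ∑ i, (((s i : ℂ))⁻¹) • E i := by
    apply Matrix.inv_eq_left_inv
    rw [hAdec, sum_smul_mul_sum_smul E hEidem hEorth]
    have h1 : ∀ i : Fin k, ((s i : ℂ))⁻¹ * (s i : ℂ) = 1 := fun i =>
      inv_mul_cancel₀ (by exact_mod_cast (hs i).ne')
    simp only [h1, one_smul, hEsum]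
  have hBinv : B⁻¹ = ∑ j, (((t j : ℂ))⁻¹) • F j := by
    apply Matrix.inv_eq_left_inv
    rw [hBdec, sum_smul_mul_sum_smul F hFidem hForth]
    have h1 : ∀ j : Fin l, ((t j : ℂ))⁻¹ * (t j : ℂ) = 1 := fun j =>
      inv_mul_cancel₀ (by exact_mod_cast (ht j).ne')
    simp only [h1, one_smul, hFsum]
  have hsmul : ∀ (r : ℝ) (M : Matrix (Fin m) (Fin m) ℂ), r • M = (r : ℂ) • M := fun r M => by
    rw [← algebraMap_smul ℂ r M, Complex.coe_algebraMap]
  have hptwise : ∀ lam x : ℝ,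
      NormedSpace.exp ((-(x * (1 - lam)) : ℝ) • A⁻¹) * X *
        NormedSpace.exp ((-(x * lam) : ℝ) • B⁻¹)
      = ∑ i, ∑ j, Real.exp (-(((1 - lam) * (s i)⁻¹ + lam * (t j)⁻¹) * x)) • (E i * X * F j) := by
    intro lam x
    have e1 : (-(x * (1 - lam)) : ℝ) • A⁻¹
        = ∑ i, ((-(x * (1 - lam)) * (s i)⁻¹ : ℝ) : ℂ) • E i := by
      rw [hAinv, Finset.smul_sum]
      refine Finset.sum_congr rfl fun i _ => ?_
      rw [hsmul, smul_smul]
      congr 1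
      push_cast
      ring
    have e2 : (-(x * lam) : ℝ) • B⁻¹
        = ∑ j, ((-(x * lam) * (t j)⁻¹ : ℝ) : ℂ) • F j := by
      rw [hBinv, Finset.smul_sum]
      refine Finset.sum_congr rfl fun j _ => ?_
      rw [hsmul, smul_smul]
      congr 1
      push_cast
      ring
    rw [e1, e2, exp_sum_smul_proj E hEidem hEorth hEsum,
      exp_sum_smul_proj F hFidem hForth hFsum, triple_sum_mul]
    refine Finset.sum_congr rfl fun i _ => Finset.sum_congr rfl fun j _ => ?_
    rw [← Complex.exp_add, ← Complex.ofReal_add,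
      show -(x * (1 - lam)) * (s i)⁻¹ + -(x * lam) * (t j)⁻¹
        = -(((1 - lam) * (s i)⁻¹ + lam * (t j)⁻¹) * x) by ring,
      ← Complex.ofReal_exp, ← hsmul]
  have hpos : ∀ (lam : ℝ), lam ∈ Set.Icc (0:ℝ) 1 → ∀ (i : Fin k) (j : Fin l),
      0 < (1 - lam) * (s i)⁻¹ + lam * (t j)⁻¹ := fun lam hlam i j =>
    denom_pos (hs i) (ht j) hlam.1 hlam.2
  have hinner : ∀ lam ∈ Set.Icc (0:ℝ) 1,
      (∫ x in Set.Ioi (0:ℝ),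
          NormedSpace.exp ((-(x * (1 - lam)) : ℝ) • A⁻¹) * X *
            NormedSpace.exp ((-(x * lam) : ℝ) • B⁻¹))
      = ∑ i, ∑ j, (((1 - lam) * (s i)⁻¹ + lam * (t j)⁻¹)⁻¹ : ℝ) • (E i * X * F j) := by
    intro lam hlam
    have hint : ∀ (i : Fin k) (j : Fin l),
        Integrable (fun x => Real.exp (-(((1 - lam) * (s i)⁻¹ + lam * (t j)⁻¹) * x)) •
          (E i * X * F j)) (volume.restrict (Set.Ioi (0:ℝ))) := fun i j =>
      (((exp_neg_integrableOn_Ioi 0 (hpos lam hlam i j)).congr_fun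
        (fun x _ => by rw [neg_mul]) measurableSet_Ioi)).smul_const _
    simp only [hptwise lam]
    rw [MeasureTheory.integral_finset_sum _
      (fun i _ => integrable_finset_sum _ fun j _ => hint i j)]
    refine Finset.sum_congr rfl fun i _ => ?_
    rw [MeasureTheory.integral_finset_sum _ (fun j _ => hint i j)]
    refine Finset.sum_congr rfl fun j _ => ?_
    rw [integral_smul_const, integral_exp_neg_mul_Ioi (hpos lam hlam i j)]
  rw [setIntegral_congr_fun measurableSet_Icc hinner]
  have hcont : ∀ (i : Fin k) (j : Fin l),
      IntegrableOn (fun lam => (((1 - lam) * (s i)⁻¹ + lam * (t j)⁻¹)⁻¹ : ℝ) •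
        (E i * X * F j)) (Set.Icc (0:ℝ) 1) μ := by
    intro i j
    refine Integrable.smul_const (ContinuousOn.integrableOn_compact isCompact_Icc ?_).integrable _
    refine ContinuousOn.inv₀ (Continuous.continuousOn (((continuous_const.sub continuous_id).mul continuous_const).add (continuous_id.mul continuous_const))) ?_
    exact fun lam hlam => (hpos lam hlam i j).ne'
  rw [MeasureTheory.integral_finset_sum _
    (fun i _ => integrable_finset_sum _ fun j _ => (hcont i j).integrable)]
  refine Finset.sum_congr rfl fun i _ => ?_
  rw [MeasureTheory.integral_finset_sum _ (fun j _ => (hcont i j).integrable)]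
  refine Finset.sum_congr rfl fun j _ => ?_
  rw [integral_smul_const, hsmul]
end

section
/- Let m ≥ 1 and let T be an invertible m×m complex matrix with polar decomposition T = U·P, where U is unitary and P = (T*T)^{1/2} has spectral decomposition P = Σ_{i=1}^{k} s_i E_i with pairwise distinct s_i > 0 and Hermitian idempotent matrices E_i satisfying E_iE_j = 0 for i ≠ j and Σ_i E_i = I. Let μ be a probability measure on [0,1] such that ∫_{[0,1]} λ dμ(λ) ∈ (0,1), and define Δ_μ(T) := Σ_{i,j=1}^{k} P_μ(s_i, s_j) E_i U E_j, where P_μ(s,t) := ∫_{[0,1]} ((1−λ)s⁻¹ + λt⁻¹)⁻¹ dμ(λ). Then Δ_μ(T) = T if and only if T is normal (i.e., T*T = TT*). -/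
open MeasureTheory Matrix
open scoped ComplexOrder

private lemma diag_integral' (μ : Measure ℝ) [IsProbabilityMeasure μ]
    (hμ : μ (Set.Icc (0:ℝ) 1) = 1) {a : ℝ} :
    (∫ lam in Set.Icc (0:ℝ) 1, ((1 - lam) * a⁻¹ + lam * a⁻¹)⁻¹ ∂μ) = a := by
  have h : ∀ lam : ℝ, ((1 - lam) * a⁻¹ + lam * a⁻¹)⁻¹ = a := by
    intro lam
    have h1 : (1 - lam) * a⁻¹ + lam * a⁻¹ = a⁻¹ := by ring
    rw [h1, inv_inv]
  simp only [h]
  rw [setIntegral_const, measureReal_def, hμ]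
  simp

private lemma offdiag_integral (μ : Measure ℝ) [IsProbabilityMeasure μ]
    (hμ : μ (Set.Icc (0:ℝ) 1) = 1)
    (hmean : (∫ lam in Set.Icc (0:ℝ) 1, lam ∂μ) ∈ Set.Ioo (0:ℝ) 1)
    {a b : ℝ} (ha : 0 < a) (hb : 0 < b) (hab : a ≠ b) :
    (∫ lam in Set.Icc (0:ℝ) 1, ((1 - lam) * a⁻¹ + lam * b⁻¹)⁻¹ ∂μ) ≠ b := by
  set I : Set ℝ := Set.Icc 0 1 with hI
  set D : ℝ → ℝ := fun lam => (1 - lam) * b + lam * a with hDdef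
  set f : ℝ → ℝ := fun lam => ((1 - lam) * a⁻¹ + lam * b⁻¹)⁻¹ with hfdef
  set g : ℝ → ℝ := fun lam => (1 - lam) * b / D lam with hgdef
  set M : ℝ := max a b with hM
  have hMpos : 0 < M := lt_max_of_lt_left ha
  -- D positive on I
  have hD : ∀ lam ∈ I, 0 < D lam := by
    intro lam hlam
    obtain ⟨h0, h1⟩ := hlam
    have h2 : min a b ≤ D lam := by
      have := min_le_left a b
      have := min_le_right a b
      simp only [hDdef]
      nlinarith
    have : 0 < min a b := lt_min ha hb
    linarith
  -- D ≤ M on I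
  have hDM : ∀ lam ∈ I, D lam ≤ M := by
    intro lam hlam
    obtain ⟨h0, h1⟩ := hlam
    have := le_max_left a b
    have := le_max_right a b
    simp only [hDdef]
    nlinarith
  -- f = a*b/D on I
  have hfD : ∀ lam ∈ I, f lam = a * b / D lam := by
    intro lam hlam
    have hD' := (hD lam hlam).ne'
    simp only [hfdef, hDdef] at *
    rw [eq_div_iff hD']
    field_simp
  -- pointwise key identity on I
  have hkey : ∀ lam ∈ I, b - f lam = (b - a) * g lam := by
    intro lam hlam
    rw [hfD lam hlam]
    have hD' := (hD lam hlam).ne'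
    simp only [hgdef, hDdef] at *
    rw [mul_div_assoc', eq_div_iff hD', sub_mul, div_mul_cancel₀ _ hD']
    ring
  -- continuity/integrability
  have hDcont : Continuous D := by fun_prop
  have hfcont : ContinuousOn f I := by
    apply ContinuousOn.inv₀ (by fun_prop)
    intro lam hlam
    have h1 : (1 - lam) * a⁻¹ + lam * b⁻¹ = D lam / (a * b) := by
      simp only [hDdef]; field_simp
    rw [h1]
    exact (div_pos (hD lam hlam) (mul_pos ha hb)).ne'
  have hgcont : ContinuousOn g I := by
    apply ContinuousOn.div (by fun_prop) hDcont.continuousOn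
    intro lam hlam; exact (hD lam hlam).ne'
  have hfi : IntegrableOn f I μ := hfcont.integrableOn_compact isCompact_Icc
  have hgi : IntegrableOn g I μ := hgcont.integrableOn_compact isCompact_Icc
  have h1i : IntegrableOn (fun lam : ℝ => 1 - lam) I μ :=
    (Continuous.continuousOn (by fun_prop)).integrableOn_compact isCompact_Icc
  have hidi : IntegrableOn (fun lam : ℝ => lam) I μ :=
    continuousOn_id.integrableOn_compact isCompact_Icc
  -- ∫ (1 - lam) = 1 - mean > 0
  have hint1 : (∫ lam in I, (1 - lam) ∂μ) = 1 - (∫ lam in I, lam ∂μ) := by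
    rw [integral_sub (integrableOn_const (C := (1:ℝ)) (by rw [hμ]; exact ENNReal.one_ne_top)) hidi]
    rw [setIntegral_const, measureReal_def, hμ]
    simp
  have hpos1 : 0 < (∫ lam in I, (1 - lam) ∂μ) := by
    rw [hint1]; linarith [hmean.2]
  -- lower bound for g
  have hglb : ∀ lam ∈ I, (1 - lam) * (b / M) ≤ g lam := by
    intro lam hlam
    obtain ⟨h0, h1⟩ := hlam
    have hDl := hD lam ⟨h0, h1⟩
    have hDMl := hDM lam ⟨h0, h1⟩
    have h2 : (1 - lam) * b / M ≤ g lam := by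
      simp only [hgdef]
      gcongr <;> first | exact hDl | exact hDMl | nlinarith
    calc (1 - lam) * (b / M) = (1 - lam) * b / M := by ring
      _ ≤ g lam := h2
  have hci : IntegrableOn (fun lam : ℝ => (1 - lam) * (b / M)) I μ :=
    (Continuous.continuousOn (by fun_prop)).integrableOn_compact isCompact_Icc
  have hgint : (∫ lam in I, (1 - lam) * (b / M) ∂μ) ≤ ∫ lam in I, g lam ∂μ :=
    setIntegral_mono_on hci hgi measurableSet_Icc hglb
  have hcval : (∫ lam in I, (1 - lam) * (b / M) ∂μ)
      = (∫ lam in I, (1 - lam) ∂μ) * (b / M) := by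
    rw [integral_mul_const]
  have hgpos : 0 < ∫ lam in I, g lam ∂μ := by
    refine lt_of_lt_of_le ?_ hgint
    rw [hcval]
    exact mul_pos hpos1 (div_pos hb hMpos)
  -- putting it together
  have hsub : (∫ lam in I, (b - f lam) ∂μ) = b - ∫ lam in I, f lam ∂μ := by
    rw [integral_sub (integrableOn_const (C := b) (by rw [hμ]; exact ENNReal.one_ne_top)) hfi]
    rw [setIntegral_const, measureReal_def, hμ]
    simp
  have hsub2 : (∫ lam in I, (b - f lam) ∂μ) = (b - a) * ∫ lam in I, g lam ∂μ := by
    rw [setIntegral_congr_fun measurableSet_Icc hkey, integral_const_mul]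
  intro hcontra
  rw [hsub2] at hsub
  rw [hcontra, sub_self] at hsub
  exact mul_ne_zero (sub_ne_zero.2 (Ne.symm hab)) hgpos.ne' hsub

section
variable {m k : ℕ} (U : Matrix (Fin m) (Fin m) ℂ) (E : Fin k → Matrix (Fin m) (Fin m) ℂ)

lemma extract (hEidem : ∀ i, E i * E i = E i)
    (hEorth : ∀ i j, i ≠ j → E i * E j = 0)
    (x : Fin k → Fin k → ℂ) (a b : Fin k) :
    E a * (∑ i, ∑ j, x i j • (E i * U * E j)) * E b = x a b • (E a * U * E b) := by
  have step : E a * (∑ i, ∑ j, x i j • (E i * U * E j)) * E b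
      = ∑ i, ∑ j, x i j • ((E a * E i) * U * (E j * E b)) := by
    rw [Matrix.mul_sum, Matrix.sum_mul]
    refine Finset.sum_congr rfl fun i _ => ?_
    rw [Matrix.mul_sum, Matrix.sum_mul]
    refine Finset.sum_congr rfl fun j _ => ?_
    rw [Matrix.mul_smul, Matrix.smul_mul]
    congr 1
    simp only [Matrix.mul_assoc]
  rw [step]
  rw [Finset.sum_eq_single a]
  · rw [Finset.sum_eq_single b]
    · rw [hEidem a, hEidem b]
    · intro j _ hj
      rw [hEorth j b hj, Matrix.mul_zero, smul_zero]
    · intro h; exact absurd (Finset.mem_univ b) h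
  · intro i _ hi
    refine Finset.sum_eq_zero fun j _ => ?_
    rw [hEorth a i (Ne.symm hi), Matrix.zero_mul, Matrix.zero_mul, smul_zero]
  · intro h; exact absurd (Finset.mem_univ a) h

end


/-- Let `T = U·P` be the polar decomposition of an invertible matrix,
with `P = (T*T)^{1/2} = Σᵢ sᵢ Eᵢ` a spectral decomposition with pairwise distinct
`sᵢ > 0`.  For a probability measure `μ` on `[0,1]` with `∫ λ dμ ∈ (0,1)`, the
generalized Aluthge transformation `Δ_μ(T) = Σᵢⱼ P_μ(sᵢ,sⱼ) Eᵢ U Eⱼ` satisfies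
`Δ_μ(T) = T` iff `T` is normal. -/
theorem stmt_2 (m : ℕ) (hm : 1 ≤ m) (T : Matrix (Fin m) (Fin m) ℂ) (hT : IsUnit T.det)
    (U P : Matrix (Fin m) (Fin m) ℂ)
    (hU : U ∈ Matrix.unitaryGroup (Fin m) ℂ)
    (hP : P.PosSemidef) (hP2 : P * P = Tᴴ * T) (hpolar : T = U * P)
    (k : ℕ) (s : Fin k → ℝ) (hs : ∀ i, 0 < s i) (hsdist : Function.Injective s)
    (E : Fin k → Matrix (Fin m) (Fin m) ℂ)
    (hEherm : ∀ i, (E i).IsHermitian) (hEidem : ∀ i, E i * E i = E i)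
    (hEorth : ∀ i j, i ≠ j → E i * E j = 0) (hEsum : ∑ i, E i = 1)
    (hPdec : P = ∑ i, (s i : ℂ) • E i)
    (μ : Measure ℝ) [IsProbabilityMeasure μ] (hμ : μ (Set.Icc (0 : ℝ) 1) = 1)
    (hmean : (∫ lam in Set.Icc (0 : ℝ) 1, lam ∂μ) ∈ Set.Ioo (0 : ℝ) 1) :
    (∑ i, ∑ j,
        ((∫ lam in Set.Icc (0 : ℝ) 1,
            ((1 - lam) * (s i)⁻¹ + lam * (s j)⁻¹)⁻¹ ∂μ : ℝ) : ℂ) • (E i * U * E j)) = T ↔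
      Tᴴ * T = T * Tᴴ := by
  -- unitarity
  have hU1 : Uᴴ * U = 1 := by
    have := Matrix.mem_unitaryGroup_iff'.1 hU
    rwa [Matrix.star_eq_conjTranspose] at this
  have hU2 : U * Uᴴ = 1 := by
    have := Matrix.mem_unitaryGroup_iff.1 hU
    rwa [Matrix.star_eq_conjTranspose] at this
  have hTH : Tᴴ = P * Uᴴ := by
    rw [hpolar, Matrix.conjTranspose_mul, hP.1]
  -- expansions
  have hUE : ∀ j, U * E j = ∑ i, E i * U * E j := by
    intro j
    conv_lhs => rw [← Matrix.one_mul (U * E j), ← hEsum]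
    rw [Matrix.sum_mul]
    simp [Matrix.mul_assoc]
  have hEU : ∀ i, E i * U = ∑ j, E i * U * E j := by
    intro i
    conv_lhs => rw [← Matrix.mul_one (E i * U), ← hEsum]
    rw [Matrix.mul_sum]
  have hT2 : T = ∑ i, ∑ j, (s j : ℂ) • (E i * U * E j) := by
    have : T = ∑ j, ∑ i, (s j : ℂ) • (E i * U * E j) := by
      rw [hpolar, hPdec, Matrix.mul_sum]
      refine Finset.sum_congr rfl fun j _ => ?_
      rw [Matrix.mul_smul, hUE j, Finset.smul_sum]
    rw [this, Finset.sum_comm]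
  have hPP : P * P = ∑ i, ((s i : ℂ)^2) • E i := by
    rw [hPdec, Finset.sum_mul_sum]
    refine Finset.sum_congr rfl fun i _ => ?_
    rw [Finset.sum_eq_single i]
    · rw [Matrix.smul_mul, Matrix.mul_smul, hEidem i, smul_smul, sq]
    · intro j _ hj
      rw [Matrix.smul_mul, Matrix.mul_smul, hEorth i j (Ne.symm hj), smul_zero, smul_zero]
    · intro h; exact absurd (Finset.mem_univ i) h
  have hPPU : P * P * U = ∑ i, ∑ j, ((s i : ℂ)^2) • (E i * U * E j) := by
    rw [hPP, Matrix.sum_mul]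
    refine Finset.sum_congr rfl fun i _ => ?_
    conv_lhs => rw [Matrix.smul_mul, hEU i]
    rw [Finset.smul_sum]
  have hUPP : U * (P * P) = ∑ i, ∑ j, ((s j : ℂ)^2) • (E i * U * E j) := by
    have : U * (P * P) = ∑ j, ∑ i, ((s j : ℂ)^2) • (E i * U * E j) := by
      rw [hPP, Matrix.mul_sum]
      refine Finset.sum_congr rfl fun j _ => ?_
      rw [Matrix.mul_smul, hUE j, Finset.smul_sum]
    rw [this, Finset.sum_comm]
  -- distinct squares
  have hsq_ne : ∀ a b : Fin k, a ≠ b → ((s a : ℂ)^2) ≠ ((s b : ℂ)^2) := by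
    intro a b hab h
    have h' : (s a)^2 = (s b)^2 := by exact_mod_cast h
    have h2 : (s a - s b) * (s a + s b) = 0 := by linear_combination h'
    rcases mul_eq_zero.1 h2 with h3 | h3
    · exact hab (hsdist (by linarith))
    · nlinarith [hs a, hs b]
  -- the block-vanishing condition
  have hNtoD : Tᴴ * T = T * Tᴴ → ∀ a b, a ≠ b → E a * U * E b = 0 := by
    intro hnorm a b hab
    have h2 : T * Tᴴ = U * (P * P) * Uᴴ := by
      rw [hTH, hpolar]
      simp [Matrix.mul_assoc]
    have h3 : P * P = U * (P * P) * Uᴴ := by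
      conv_lhs => rw [hP2, hnorm, h2]
    have hcomm : P * P * U = U * (P * P) := by
      calc P * P * U = U * (P * P) * Uᴴ * U := by rw [← h3]
        _ = U * (P * P) * (Uᴴ * U) := by rw [Matrix.mul_assoc]
        _ = U * (P * P) := by rw [hU1, Matrix.mul_one]
    have h4 : ((s a : ℂ)^2) • (E a * U * E b) = ((s b : ℂ)^2) • (E a * U * E b) := by
      calc ((s a : ℂ)^2) • (E a * U * E b)
          = E a * (P * P * U) * E b := by
            rw [hPPU, extract U E hEidem hEorth (fun i j => (s i : ℂ)^2) a b]
        _ = E a * (U * (P * P)) * E b := by rw [hcomm]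
        _ = ((s b : ℂ)^2) • (E a * U * E b) := by
            rw [hUPP, extract U E hEidem hEorth (fun i j => (s j : ℂ)^2) a b]
    have h5 : (((s a : ℂ)^2) - ((s b : ℂ)^2)) • (E a * U * E b) = 0 := by
      rw [sub_smul, h4, sub_self]
    exact (smul_eq_zero.1 h5).resolve_left (sub_ne_zero.2 (hsq_ne a b hab))
  have hDtoN : (∀ a b, a ≠ b → E a * U * E b = 0) → Tᴴ * T = T * Tᴴ := by
    intro hD
    have hcomm : P * P * U = U * (P * P) := by
      rw [hPPU, hUPP]
      refine Finset.sum_congr rfl fun i _ => Finset.sum_congr rfl fun j _ => ?_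
      by_cases h : i = j
      · subst h; rfl
      · rw [hD i j h, smul_zero, smul_zero]
    have h2 : T * Tᴴ = P * P := by
      calc T * Tᴴ = U * (P * P) * Uᴴ := by rw [hTH, hpolar]; simp [Matrix.mul_assoc]
        _ = P * P * U * Uᴴ := by rw [hcomm]
        _ = P * P * (U * Uᴴ) := by rw [Matrix.mul_assoc]
        _ = P * P := by rw [hU2, Matrix.mul_one]
    rw [h2]
    exact hP2.symm
  constructor
  · intro hA
    apply hDtoN
    intro a b hab
    have h1 := extract U E hEidem hEorth
      (fun i j => ((∫ lam in Set.Icc (0 : ℝ) 1,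
          ((1 - lam) * (s i)⁻¹ + lam * (s j)⁻¹)⁻¹ ∂μ : ℝ) : ℂ)) a b
    have h2 := extract U E hEidem hEorth (fun i j => (s j : ℂ)) a b
    have h3 : ((∫ lam in Set.Icc (0 : ℝ) 1,
          ((1 - lam) * (s a)⁻¹ + lam * (s b)⁻¹)⁻¹ ∂μ : ℝ) : ℂ) • (E a * U * E b)
        = (s b : ℂ) • (E a * U * E b) := by
      calc ((∫ lam in Set.Icc (0 : ℝ) 1,
              ((1 - lam) * (s a)⁻¹ + lam * (s b)⁻¹)⁻¹ ∂μ : ℝ) : ℂ) • (E a * U * E b)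
          = E a * (∑ i, ∑ j,
              ((∫ lam in Set.Icc (0 : ℝ) 1,
                ((1 - lam) * (s i)⁻¹ + lam * (s j)⁻¹)⁻¹ ∂μ : ℝ) : ℂ) • (E i * U * E j)) * E b :=
            h1.symm
        _ = E a * T * E b := by rw [hA]
        _ = E a * (∑ i, ∑ j, (s j : ℂ) • (E i * U * E j)) * E b := by rw [← hT2]
        _ = (s b : ℂ) • (E a * U * E b) := h2
    have h4 : (((∫ lam in Set.Icc (0 : ℝ) 1,
          ((1 - lam) * (s a)⁻¹ + lam * (s b)⁻¹)⁻¹ ∂μ) - s b : ℝ) : ℂ) • (E a * U * E b) = 0 := by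
      push_cast
      rw [sub_smul, h3, sub_self]
    have h5 : ((∫ lam in Set.Icc (0 : ℝ) 1,
          ((1 - lam) * (s a)⁻¹ + lam * (s b)⁻¹)⁻¹ ∂μ) - s b : ℝ) ≠ 0 :=
      sub_ne_zero.2 (offdiag_integral μ hμ hmean (hs a) (hs b) (fun h => hab (hsdist h)))
    refine (smul_eq_zero.1 h4).resolve_left ?_
    exact_mod_cast h5
  · intro hnorm
    have hD := hNtoD hnorm
    rw [hT2]
    refine Finset.sum_congr rfl fun i _ => Finset.sum_congr rfl fun j _ => ?_
    by_cases h : i = j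
    · subst h
      rw [diag_integral' μ hμ]
    · rw [hD i j h, smul_zero, smul_zero]
end

section
/- Let m ≥ 1, let T be an invertible m×m complex matrix, set |T| := (T*T)^{1/2} and U := T·|T|⁻¹ (so T = U|T| is the polar decomposition with U unitary), and let λ ∈ (0,1). Then |T|^{1−λ} · U · |T|^{λ} = T if and only if T is normal (i.e., T*T = TT*). -/
open Matrix
open scoped ComplexOrder

namespace Matrix.PosSemidef

/-- The positive semidefinite square root of a positive semidefinite matrix (the definition
removed from Mathlib, restored verbatim). -/
noncomputable def sqrt {n 𝕜 : Type*} [Fintype n] [RCLike 𝕜] [DecidableEq n] {A : Matrix n n 𝕜}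
    (hA : PosSemidef A) : Matrix n n 𝕜 :=
  hA.1.eigenvectorUnitary.1 * diagonal ((↑) ∘ (√·) ∘ hA.1.eigenvalues) *
  (star hA.1.eigenvectorUnitary : Matrix n n 𝕜)

lemma posSemidef_sqrt {n 𝕜 : Type*} [Fintype n] [RCLike 𝕜] [DecidableEq n] {A : Matrix n n 𝕜}
    (hA : PosSemidef A) : PosSemidef hA.sqrt := by
  unfold sqrt
  rw [Matrix.star_eq_conjTranspose]
  refine Matrix.PosSemidef.mul_mul_conjTranspose_same ?_ _
  refine Matrix.PosSemidef.diagonal fun i => ?_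
  simp only [Function.comp_apply, Pi.zero_apply]
  exact_mod_cast Real.sqrt_nonneg _

end Matrix.PosSemidef

lemma Matrix.PosSemidef.sqrt_mul_self' {n : Type*} [Fintype n] [DecidableEq n]
    {A : Matrix n n ℂ} (hA : PosSemidef A) : hA.sqrt * hA.sqrt = A := by
  have hsp := hA.1.spectral_theorem
  rw [Unitary.conjStarAlgAut_apply] at hsp
  set V : Matrix n n ℂ := (hA.1.eigenvectorUnitary : Matrix n n ℂ) with hV
  have hV1 : star V * V = 1 := Unitary.star_mul_self_of_mem (SetLike.coe_mem _)
  unfold Matrix.PosSemidef.sqrt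
  rw [← hV]
  have e : V * diagonal (RCLike.ofReal ∘ (√·) ∘ hA.1.eigenvalues) * star V *
      (V * diagonal (RCLike.ofReal ∘ (√·) ∘ hA.1.eigenvalues) * star V) =
      V * (diagonal (RCLike.ofReal ∘ (√·) ∘ hA.1.eigenvalues) * (star V * V) *
        diagonal (RCLike.ofReal ∘ (√·) ∘ hA.1.eigenvalues)) * star V := by
    simp only [mul_assoc]
  rw [e, hV1, mul_one, diagonal_mul_diagonal]
  conv_rhs => rw [hsp]
  congr 3
  funext i
  simp only [Function.comp_apply]
  rw [← RCLike.ofReal_mul, Real.mul_self_sqrt (hA.eigenvalues_nonneg i)]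

private lemma rpow_base_inj {x y r : ℝ} (hx : 0 < x) (hy : 0 < y) (hr : r ≠ 0)
    (h : x ^ r = y ^ r) : x = y := by
  have h2 := congrArg (fun t : ℝ => t ^ r⁻¹) h
  simpa [← Real.rpow_mul hx.le, ← Real.rpow_mul hy.le, mul_inv_cancel₀ hr] using h2

set_option maxHeartbeats 1000000 in
/-- For an invertible matrix `T` with polar decomposition `T = U|T|`
(`|T| = (T*T)^{1/2}`, `U = T|T|⁻¹`) and `λ ∈ (0,1)`, the λ-weighted Aluthge
transformation satisfies `|T|^{1−λ} U |T|^{λ} = T` iff `T` is normal.  Real powers of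
`|T|` are taken via the (continuous) functional calculus for Hermitian matrices. -/
theorem stmt_3 (m : ℕ) (hm : 1 ≤ m) (T : Matrix (Fin m) (Fin m) ℂ) (hT : IsUnit T.det)
    (lam : ℝ) (hlam : lam ∈ Set.Ioo (0 : ℝ) 1) :
    (Matrix.posSemidef_conjTranspose_mul_self T).posSemidef_sqrt.isHermitian.cfc
        (fun x : ℝ => x ^ (1 - lam)) *
      (T * ((Matrix.posSemidef_conjTranspose_mul_self T).sqrt)⁻¹) *
      (Matrix.posSemidef_conjTranspose_mul_self T).posSemidef_sqrt.isHermitian.cfc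
        (fun x : ℝ => x ^ lam) = T ↔
      Tᴴ * T = T * Tᴴ := by
  obtain ⟨hl0, hl1⟩ := hlam
  set hS := Matrix.posSemidef_conjTranspose_mul_self T with hSdef
  set P := hS.sqrt with hPdef
  set hH := hS.posSemidef_sqrt.isHermitian with hHdef
  set W : Matrix (Fin m) (Fin m) ℂ := (IsHermitian.eigenvectorUnitary hH : Matrix (Fin m) (Fin m) ℂ) with hWdef
  set d : Fin m → ℝ := hH.eigenvalues with hddef
  -- unitary facts
  have hW1 : star W * W = 1 := Unitary.star_mul_self_of_mem (SetLike.coe_mem _)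
  have hW2 : W * star W = 1 := Unitary.mul_star_self_of_mem (SetLike.coe_mem _)
  have assoc1 : ∀ Z : Matrix (Fin m) (Fin m) ℂ, star W * (W * Z) = Z := fun Z => by
    rw [← mul_assoc, hW1, one_mul]
  have assoc2 : ∀ Z : Matrix (Fin m) (Fin m) ℂ, W * (star W * Z) = Z := fun Z => by
    rw [← mul_assoc, hW2, one_mul]
  have unconj : ∀ X : Matrix (Fin m) (Fin m) ℂ, star W * (W * X * star W) * W = X := by
    intro X
    have h : star W * (W * X * star W) * W = (star W * W) * X * (star W * W) := by
      simp only [mul_assoc]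
    rw [h, hW1, one_mul, mul_one]
  have conj_inj : ∀ X Y : Matrix (Fin m) (Fin m) ℂ,
      W * X * star W = W * Y * star W ↔ X = Y := by
    intro X Y
    constructor
    · intro h
      have := congrArg (fun M => star W * M * W) h
      simpa only [unconj] using this
    · rintro rfl; rfl
  have conj_mul : ∀ X Y : Matrix (Fin m) (Fin m) ℂ,
      (W * X * star W) * (W * Y * star W) = W * (X * Y) * star W := by
    intro X Y
    simp only [mul_assoc, assoc1]
  -- positivity of eigenvalues
  have hPP : P * P = Tᴴ * T := hS.sqrt_mul_self'
  have hdetT : IsUnit ((Tᴴ * T).det) := by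
    rw [det_mul, det_conjTranspose]
    exact (hT.star).mul hT
  have hdetP : IsUnit P.det := by
    have : IsUnit (P.det * P.det) := by rw [← det_mul, hPP]; exact hdetT
    exact isUnit_of_mul_isUnit_left this
  have hd0 : ∀ i, 0 < d i := by
    have hdet := hH.det_eq_prod_eigenvalues
    rw [hdet] at hdetP
    intro i
    have hnn : 0 ≤ d i := hS.posSemidef_sqrt.eigenvalues_nonneg i
    have hne : d i ≠ 0 := by
      intro hz
      refine hdetP.ne_zero (Finset.prod_eq_zero (Finset.mem_univ i) ?_)
      rw [← hddef] at *
      rw [hz]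
      norm_num
    exact lt_of_le_of_ne hnn (Ne.symm hne)
  -- spectral decomposition
  set D : Matrix (Fin m) (Fin m) ℂ := diagonal (RCLike.ofReal ∘ d) with hDdef
  have hPspec : P = W * D * star W := hH.spectral_theorem.trans (Unitary.conjStarAlgAut_apply _ _)
  set C : Matrix (Fin m) (Fin m) ℂ := star W * T * W with hCdef
  have hTC : T = W * C * star W := by
    rw [hCdef]
    have h : W * (star W * T * W) * star W = (W * star W) * T * (W * star W) := by
      simp only [mul_assoc]
    rw [h, hW2, one_mul, mul_one]
  -- inverse of P
  set Dinv : Matrix (Fin m) (Fin m) ℂ := diagonal (fun i => (RCLike.ofReal (d i) : ℂ)⁻¹)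
    with hDinvdef
  have hdne : ∀ i, (RCLike.ofReal (d i) : ℂ) ≠ 0 := by
    intro i
    simp only [ne_eq, RCLike.ofReal_eq_zero]
    exact (hd0 i).ne'
  have hDDinv : D * Dinv = 1 := by
    rw [hDdef, hDinvdef, diagonal_mul_diagonal, ← diagonal_one, diagonal_eq_diagonal_iff]
    intro i
    exact mul_inv_cancel₀ (hdne i)
  have hDinvD : Dinv * D = 1 := by
    rw [hDdef, hDinvdef, diagonal_mul_diagonal, ← diagonal_one, diagonal_eq_diagonal_iff]
    intro i
    exact inv_mul_cancel₀ (hdne i)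
  have hPinv : P⁻¹ = W * Dinv * star W := by
    apply Matrix.inv_eq_right_inv
    rw [hPspec, conj_mul, hDDinv, mul_one, hW2]
  -- the two diagonal cfc matrices
  set Da : Matrix (Fin m) (Fin m) ℂ :=
    diagonal (RCLike.ofReal ∘ (fun x : ℝ => x ^ (1 - lam)) ∘ d) with hDadef
  set Db : Matrix (Fin m) (Fin m) ℂ :=
    diagonal (RCLike.ofReal ∘ (fun x : ℝ => x ^ lam) ∘ d) with hDbdef
  have hcfa : hH.cfc (fun x : ℝ => x ^ (1 - lam)) = W * Da * star W := Unitary.conjStarAlgAut_apply _ _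
  have hcfb : hH.cfc (fun x : ℝ => x ^ lam) = W * Db * star W := Unitary.conjStarAlgAut_apply _ _
  -- Step 1 : LHS equation ↔ Da * C * Db = C * D
  have step1 : (hH.cfc (fun x : ℝ => x ^ (1 - lam)) * (T * P⁻¹) *
      hH.cfc (fun x : ℝ => x ^ lam) = T) ↔ Da * C * Db = C * D := by
    rw [hcfa, hcfb, hPinv]
    conv_lhs => rw [hTC]
    rw [conj_mul, conj_mul, conj_mul, conj_inj]
    have hcomm : Dinv * (Db * D) = Db := by
      rw [hDinvdef, hDbdef, hDdef, diagonal_mul_diagonal, diagonal_mul_diagonal,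
        diagonal_eq_diagonal_iff]
      intro i
      simp only [Function.comp_apply]
      rw [mul_comm (RCLike.ofReal ((d i) ^ lam) : ℂ)]
      exact inv_mul_cancel_left₀ (hdne i) _
    have key : Da * (C * Dinv) * Db * D = Da * C * Db := by
      calc Da * (C * Dinv) * Db * D = Da * (C * (Dinv * (Db * D))) := by simp only [mul_assoc]
        _ = Da * (C * Db) := by rw [hcomm]
        _ = Da * C * Db := by rw [← mul_assoc]
    constructor
    · intro h
      rw [← key, h]
    · intro h
      calc Da * (C * Dinv) * Db = Da * (C * Dinv) * Db * (D * Dinv) := by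
            rw [hDDinv, mul_one]
        _ = Da * (C * Dinv) * Db * D * Dinv := (mul_assoc _ _ _).symm
        _ = Da * C * Db * Dinv := by rw [key]
        _ = C * D * Dinv := by rw [h]
        _ = C := by rw [mul_assoc, hDDinv, mul_one]
  -- Step 2 : entrywise form of step 1's RHS
  have step2 : Da * C * Db = C * D ↔ ∀ i j,
      (RCLike.ofReal ((d i) ^ (1 - lam)) : ℂ) * C i j * RCLike.ofReal ((d j) ^ lam)
        = C i j * RCLike.ofReal (d j) := by
    rw [← Matrix.ext_iff]
    constructor
    · intro h i j
      have := h i j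
      simpa only [hDadef, hDbdef, hDdef, mul_diagonal, diagonal_mul,
        Function.comp_apply] using this
    · intro h i j
      simpa only [hDadef, hDbdef, hDdef, mul_diagonal, diagonal_mul,
        Function.comp_apply] using h i j
  -- The key predicate
  have hpred1 : (∀ i j,
      (RCLike.ofReal ((d i) ^ (1 - lam)) : ℂ) * C i j * RCLike.ofReal ((d j) ^ lam)
        = C i j * RCLike.ofReal (d j)) ↔ ∀ i j, C i j = 0 ∨ d i = d j := by
    constructor
    · intro h i j
      by_cases hc : C i j = 0
      · exact Or.inl hc
      · right
        have h1 : C i j * ((RCLike.ofReal ((d i) ^ (1 - lam)) : ℂ) *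
            RCLike.ofReal ((d j) ^ lam)) = C i j * RCLike.ofReal (d j) := by
          rw [← h i j]; ring
        have h2 : (RCLike.ofReal ((d i) ^ (1 - lam)) : ℂ) * RCLike.ofReal ((d j) ^ lam)
            = RCLike.ofReal (d j) := mul_left_cancel₀ hc h1
        rw [← RCLike.ofReal_mul] at h2
        have h3 : (d i) ^ (1 - lam) * (d j) ^ lam = d j := RCLike.ofReal_injective (K := ℂ) h2
        have hbj : (0:ℝ) < (d j) ^ lam := Real.rpow_pos_of_pos (hd0 j) lam
        have h4 : (d i) ^ (1 - lam) = d j / (d j) ^ lam := by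
          rw [eq_div_iff hbj.ne']
          exact h3
        have h5 : (d j : ℝ) ^ (1 - lam) = d j / (d j) ^ lam := by
          rw [Real.rpow_sub (hd0 j), Real.rpow_one]
        exact rpow_base_inj (hd0 i) (hd0 j) (ne_of_gt (by linarith)) (h4.trans h5.symm)
    · intro h i j
      rcases h i j with hc | hd
      · rw [hc]; ring
      · rw [hd]
        have : (d j) ^ (1 - lam) * (d j) ^ lam = d j := by
          rw [← Real.rpow_add (hd0 j)]
          norm_num
        calc (RCLike.ofReal ((d j) ^ (1 - lam)) : ℂ) * C i j * RCLike.ofReal ((d j) ^ lam)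
            = C i j * RCLike.ofReal ((d j) ^ (1 - lam) * (d j) ^ lam) := by
              rw [RCLike.ofReal_mul]; ring
          _ = C i j * RCLike.ofReal (d j) := by rw [this]
  -- Normality side
  have hTH : Tᴴ = W * Cᴴ * star W := by
    calc Tᴴ = (W * C * star W)ᴴ := by rw [← hTC]
      _ = (star W)ᴴ * (W * C)ᴴ := conjTranspose_mul _ _
      _ = (star W)ᴴ * (Cᴴ * Wᴴ) := by rw [conjTranspose_mul]
      _ = W * Cᴴ * star W := by
          rw [← star_eq_conjTranspose, ← star_eq_conjTranspose W, star_star, mul_assoc]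
  have hCC : Cᴴ * C = D * D := by
    rw [← conj_inj, ← conj_mul, ← hTH, ← hTC, ← conj_mul, ← hPspec, hPP]
  -- C is invertible (right inverse)
  set Ci : Matrix (Fin m) (Fin m) ℂ := star W * T⁻¹ * W with hCidef
  have hCCi : C * Ci = 1 := by
    rw [hCdef, hCidef]
    have h : (star W * T * W) * (star W * T⁻¹ * W) = star W * (T * (W * star W) * T⁻¹) * W := by
      simp only [mul_assoc]
    rw [h, hW2, mul_one, Matrix.mul_nonsing_inv T hT, mul_one, hW1]
  have step3 : (Tᴴ * T = T * Tᴴ) ↔ C * (D * D) = (D * D) * C := by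
    have hiff : (Tᴴ * T = T * Tᴴ) ↔ Cᴴ * C = C * Cᴴ := by
      constructor
      · intro h
        rw [hTH, hTC, conj_mul, conj_mul, conj_inj] at h
        exact h
      · intro h
        rw [hTH, hTC, conj_mul, conj_mul, conj_inj]
        exact h
    rw [hiff]
    constructor
    · intro h1
      calc C * (D * D) = C * (Cᴴ * C) := by rw [hCC]
        _ = (C * Cᴴ) * C := by rw [← mul_assoc]
        _ = (Cᴴ * C) * C := by rw [← h1]
        _ = (D * D) * C := by rw [hCC]
    · intro h
      have h1 : C * (Cᴴ * C) = (Cᴴ * C) * C := by rw [hCC]; exact h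
      have h2 := congrArg (fun M => M * Ci) h1
      simp only [mul_assoc, hCCi, mul_one] at h2
      exact h2.symm
  have step4 : C * (D * D) = (D * D) * C ↔ ∀ i j, C i j = 0 ∨ d i = d j := by
    have hDD : D * D = diagonal (fun i => (RCLike.ofReal (d i) : ℂ) * RCLike.ofReal (d i)) := by
      rw [hDdef, diagonal_mul_diagonal, diagonal_eq_diagonal_iff]
      intro i
      simp only [Function.comp_apply]
    rw [hDD, ← Matrix.ext_iff]
    simp only [mul_diagonal, diagonal_mul]
    constructor
    · intro h i j
      by_cases hc : C i j = 0
      · exact Or.inl hc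
      · right
        have h1 : C i j * ((RCLike.ofReal (d j) : ℂ) * RCLike.ofReal (d j))
            = C i j * ((RCLike.ofReal (d i) : ℂ) * RCLike.ofReal (d i)) := by
          rw [h i j]; ring
        have h2 := mul_left_cancel₀ hc h1
        rw [← RCLike.ofReal_mul, ← RCLike.ofReal_mul] at h2
        have h3 : d j * d j = d i * d i := RCLike.ofReal_injective (K := ℂ) h2
        nlinarith [hd0 i, hd0 j]
    · intro h i j
      rcases h i j with hc | hd
      · rw [hc]; ring
      · rw [hd]; ring
  rw [step1, step2, hpred1, step3, step4]
end

section
/- Let m ≥ 1 and let T be an invertible m×m complex matrix with polar decomposition T = U·P, where U is unitary and P = (T*T)^{1/2} has spectral decomposition P = Σ_{i=1}^{k} s_i E_i with s_i > 0 and Hermitian idempotent matrices E_i satisfying E_iE_j = 0 for i ≠ j and Σ_i E_i = I. Let φ : ℝ_{>0} × ℝ_{>0} → ℂ be any function satisfying φ(s,s) = s for all s > 0. Then trace( Σ_{i,j=1}^{k} φ(s_i, s_j) E_i U E_j ) = trace(T). -/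
open Matrix
open scoped ComplexOrder

/-- With `T = U·P` the polar decomposition of an invertible matrix and
`P = Σᵢ sᵢ Eᵢ` a spectral decomposition, for any `φ` on the positive reals with
`φ(s,s) = s`, `trace(Σᵢⱼ φ(sᵢ,sⱼ) Eᵢ U Eⱼ) = trace(T)`. -/
theorem stmt_7 (m : ℕ) (hm : 1 ≤ m) (T : Matrix (Fin m) (Fin m) ℂ) (hT : IsUnit T.det)
    (U P : Matrix (Fin m) (Fin m) ℂ)
    (hU : U ∈ Matrix.unitaryGroup (Fin m) ℂ)
    (hP : P.PosSemidef) (hP2 : P * P = Tᴴ * T) (hpolar : T = U * P)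
    (k : ℕ) (s : Fin k → ℝ) (hs : ∀ i, 0 < s i)
    (E : Fin k → Matrix (Fin m) (Fin m) ℂ)
    (hEherm : ∀ i, (E i).IsHermitian) (hEidem : ∀ i, E i * E i = E i)
    (hEorth : ∀ i j, i ≠ j → E i * E j = 0) (hEsum : ∑ i, E i = 1)
    (hPdec : P = ∑ i, (s i : ℂ) • E i)
    (φ : ℝ → ℝ → ℂ) (hφ : ∀ s' : ℝ, 0 < s' → φ s' s' = (s' : ℂ)) :
    Matrix.trace (∑ i, ∑ j, φ (s i) (s j) • (E i * U * E j)) = Matrix.trace T := by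
  have key : ∀ i j, Matrix.trace (E i * U * E j)
      = if i = j then Matrix.trace (U * E i) else 0 := by
    intro i j
    rw [Matrix.trace_mul_comm, ← Matrix.mul_assoc]
    by_cases h : i = j
    · subst h; rw [hEidem i, if_pos rfl, Matrix.trace_mul_comm]
    · simp [h, hEorth j i (Ne.symm h)]
  calc Matrix.trace (∑ i, ∑ j, φ (s i) (s j) • (E i * U * E j))
      = ∑ i, ∑ j, φ (s i) (s j) * Matrix.trace (E i * U * E j) := by
        simp [Matrix.trace_sum, Matrix.trace_smul, smul_eq_mul]
    _ = ∑ i, (s i : ℂ) * Matrix.trace (U * E i) := by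
        refine Finset.sum_congr rfl fun i _ => ?_
        rw [Finset.sum_eq_single i]
        · rw [key i i, if_pos rfl, hφ (s i) (hs i)]
        · intro j _ hj; rw [key i j, if_neg (Ne.symm hj), mul_zero]
        · intro h; exact absurd (Finset.mem_univ i) h
    _ = Matrix.trace T := by
        rw [hpolar, hPdec, Matrix.mul_sum, Matrix.trace_sum]
        simp [Matrix.mul_smul, Matrix.trace_smul, smul_eq_mul]
end

section
/- Let m ≥ 1 and let T be an invertible m×m complex matrix. Set |M| := (M*M)^{1/2} for any m×m matrix M, and let U := T·|T|⁻¹ (a unitary matrix). Define a sequence of matrices by T_0 := T and T_{n+1} := (U·|T_n| + |T_n|·U)/2 for n ≥ 0. Then the sequence (T_n) converges (entrywise, equivalently in norm) to a normal matrix N (i.e., N*N = NN*), and trace(N) = trace(T). -/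
open Matrix Filter
open scoped ComplexOrder
open scoped ComplexInnerProductSpace

/-- The absolute value `|M| = (M*M)^{1/2}` of a square complex matrix. -/
noncomputable def matrixAbs {m : ℕ} (M : Matrix (Fin m) (Fin m) ℂ) :
    Matrix (Fin m) (Fin m) ℂ :=
  (Matrix.posSemidef_conjTranspose_mul_self M).1.eigenvectorUnitary.1 *
    diagonal ((↑) ∘ (√·) ∘ (Matrix.posSemidef_conjTranspose_mul_self M).1.eigenvalues) *
    (star (Matrix.posSemidef_conjTranspose_mul_self M).1.eigenvectorUnitary : Matrix (Fin m) (Fin m) ℂ)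

section
open scoped MatrixOrder

lemma matrixAbs_eq_sqrt {m : ℕ} (M : Matrix (Fin m) (Fin m) ℂ) :
    matrixAbs M = CFC.sqrt (Mᴴ * M) := by
  have hA := Matrix.posSemidef_conjTranspose_mul_self M
  rw [CFC.sqrt_eq_cfc, cfc_nnreal_eq_real _ (Mᴴ * M), hA.1.cfc_eq]
  simp only [IsHermitian.cfc, Unitary.conjStarAlgAut_apply, matrixAbs]
  congr 3
  funext i
  simp [Real.coe_toNNReal', max_eq_left (hA.eigenvalues_nonneg i)]

lemma matrixAbs_psd {m : ℕ} (M : Matrix (Fin m) (Fin m) ℂ) : (matrixAbs M).PosSemidef := by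
  rw [matrixAbs_eq_sqrt]; exact (CFC.sqrt_nonneg _).posSemidef

lemma matrixAbs_mul_self {m : ℕ} (M : Matrix (Fin m) (Fin m) ℂ) :
    matrixAbs M * matrixAbs M = Mᴴ * M := by
  rw [matrixAbs_eq_sqrt]
  exact CFC.sqrt_mul_sqrt_self _ (Matrix.posSemidef_conjTranspose_mul_self M).nonneg

lemma matrixAbs_unique {m : ℕ} {M Q : Matrix (Fin m) (Fin m) ℂ} (hQ : Q.PosSemidef)
    (h : Q ^ 2 = Mᴴ * M) : Q = matrixAbs M := by
  rw [matrixAbs_eq_sqrt]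
  exact (CFC.sqrt_unique (by rw [← sq]; exact h) hQ.nonneg).symm

end

lemma iter_half_id_add_converge {E : Type*} [NormedAddCommGroup E] [InnerProductSpace ℂ E]
    [FiniteDimensional ℂ E] (A : E →ₗ[ℂ] E)
    (hA : ∀ x y : E, ⟪A x, A y⟫ = ⟪x, y⟫) (x : E) :
    ∃ y : E, A y = y ∧
      Tendsto (fun n => (fun z : E => (2:ℂ)⁻¹ • (z + A z))^[n] x) atTop (nhds y) := by
  classical
  set L : E → E := fun z : E => (2:ℂ)⁻¹ • (z + A z) with hLdef
  have hLapp : ∀ z : E, L z = (2:ℂ)⁻¹ • (z + A z) := fun z => rfl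
  have hLlin : ∀ a b : E, L (a + b) = L a + L b := by
    intro a b; simp only [hLdef, map_add, smul_add]; abel
  have hLsmulR : ∀ (r : ℝ) (a : E), L (r • a) = r • L a := by
    intro r a
    simp only [hLdef, A.map_smul_of_tower, ← smul_add, smul_comm r]
  set K : Submodule ℂ E := LinearMap.ker (A - LinearMap.id) with hKdef
  have hKfix : ∀ z ∈ K, A z = z := by
    intro z hz
    have := LinearMap.mem_ker.mp hz
    simpa [sub_eq_zero] using this
  have hnorm : ∀ z : E, ‖A z‖ = ‖z‖ := by
    intro z
    have h := hA z z
    rw [inner_self_eq_norm_sq_to_K, inner_self_eq_norm_sq_to_K] at h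
    have h2 : (‖A z‖:ℝ)^2 = ‖z‖^2 := by exact_mod_cast h
    nlinarith [norm_nonneg (A z), norm_nonneg z]
  -- fixed vectors under L
  have hLfix : ∀ z ∈ K, L z = z := by
    intro z hz
    rw [hLapp, hKfix z hz, ← two_smul ℂ z, smul_smul]
    norm_num
  -- A maps Kᗮ into Kᗮ
  have hAW : ∀ w ∈ Kᗮ, A w ∈ Kᗮ := by
    intro w hw
    rw [Submodule.mem_orthogonal] at hw ⊢
    intro u hu
    calc ⟪u, A w⟫ = ⟪A u, A w⟫ := by rw [hKfix u hu]
    _ = ⟪u, w⟫ := hA u w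
    _ = 0 := hw u hu
  have hLW : ∀ w ∈ Kᗮ, L w ∈ Kᗮ := by
    intro w hw
    rw [hLapp]
    exact Submodule.smul_mem _ _ (Submodule.add_mem _ hw (hAW w hw))
  -- contraction on Kᗮ
  obtain ⟨c, hc0, hc1, hcontr⟩ : ∃ c : ℝ, 0 ≤ c ∧ c < 1 ∧ ∀ w ∈ Kᗮ, ‖L w‖ ≤ c * ‖w‖ := by
    by_cases hbot : Kᗮ = ⊥
    · refine ⟨0, le_refl _, one_pos, ?_⟩
      intro w hw
      rw [hbot, Submodule.mem_bot] at hw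
      simp [hw, hLapp]
    · -- the sphere in Kᗮ
      obtain ⟨v₀, hv₀mem, hv₀⟩ := Submodule.exists_mem_ne_zero_of_ne_bot hbot
      have hstrict : ∀ w ∈ Kᗮ, ‖w‖ = 1 → ‖L w‖ < 1 := by
        intro w hw hw1
        have hne : A w ≠ w := by
          intro h
          have hK : w ∈ K := by
            rw [hKdef, LinearMap.mem_ker]
            simp [h]
          have : w ∈ K ⊓ Kᗮ := ⟨hK, hw⟩
          rw [Submodule.inf_orthogonal_eq_bot, Submodule.mem_bot] at this
          rw [this] at hw1; simp at hw1
        have hpar := parallelogram_law_with_norm ℂ w (A w)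
        rw [hnorm w, hw1] at hpar
        have hsub : 0 < ‖w - A w‖ := by
          rw [norm_pos_iff, sub_ne_zero]
          exact fun h => hne h.symm
        have h4 : ‖w + A w‖^2 < 4 := by nlinarith
        have : ‖w + A w‖ < 2 := by nlinarith [norm_nonneg (w + A w)]
        rw [hLapp, norm_smul]
        simp only [norm_inv, Complex.norm_ofNat]
        linarith
      -- use compactness on the unit sphere of the subtype
      haveI : ProperSpace (↥Kᗮ) := FiniteDimensional.proper ℂ _
      have hne : (Metric.sphere (0:↥Kᗮ) 1).Nonempty := by
        refine ⟨(‖v₀‖⁻¹ : ℝ) • ⟨v₀, hv₀mem⟩, ?_⟩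
        simp [norm_smul, Submodule.norm_coe, norm_ne_zero_iff.mpr hv₀,
          inv_mul_cancel₀ (norm_ne_zero_iff.mpr hv₀)]
      have hcont : Continuous fun v : ↥Kᗮ => ‖L (v:E)‖ := by
        have hC : Continuous L := by
          have : L = fun z => (2:ℂ)⁻¹ • ((LinearMap.id + A : E →ₗ[ℂ] E) z) := rfl
          rw [this]
          exact ((LinearMap.id + A : E →ₗ[ℂ] E).continuous_of_finiteDimensional).const_smul _
        exact (hC.comp continuous_subtype_val).norm
      obtain ⟨v₁, hv₁mem, hv₁max⟩ :=
        (isCompact_sphere (0:↥Kᗮ) 1).exists_isMaxOn hne hcont.continuousOn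
      have hv₁norm : ‖(v₁:E)‖ = 1 := by
        have := Metric.mem_sphere.mp hv₁mem
        rwa [dist_zero_right] at this
      refine ⟨‖L (v₁:E)‖, norm_nonneg _, hstrict _ v₁.2 hv₁norm, ?_⟩
      intro w hw
      rcases eq_or_ne w 0 with rfl | hwne
      · simp [hLapp]
      · have hwn : ‖w‖ ≠ 0 := norm_ne_zero_iff.mpr hwne
        set v : ↥Kᗮ := (‖w‖⁻¹ : ℝ) • ⟨w, hw⟩ with hv
        have hvmem : v ∈ Metric.sphere (0:↥Kᗮ) 1 := by
          simp [hv, norm_smul, Submodule.norm_coe, inv_mul_cancel₀ hwn]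
        have hle : ‖L (v:E)‖ ≤ ‖L (v₁:E)‖ := hv₁max hvmem
        have hvL : ‖L (v:E)‖ = ‖w‖⁻¹ * ‖L w‖ := by
          have : (v : E) = (‖w‖⁻¹ : ℝ) • w := rfl
          rw [this, hLsmulR, norm_smul]
          simp
        rw [hvL] at hle
        rw [mul_comm]
        calc ‖L w‖ = ‖w‖ * (‖w‖⁻¹ * ‖L w‖) := by field_simp
        _ ≤ ‖w‖ * ‖L (v₁:E)‖ := by
            apply mul_le_mul_of_nonneg_left hle (norm_nonneg _)
  -- decompose x
  set k : E := (K.orthogonalProjectionOnto x : E) with hk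
  have hkK : k ∈ K := Subtype.coe_prop _
  set w : E := x - k with hwdef
  have hwW : w ∈ Kᗮ := K.sub_starProjection_mem_orthogonal x
  have hiter : ∀ n, L^[n] x = k + L^[n] w ∧ L^[n] w ∈ Kᗮ ∧
      ‖L^[n] w‖ ≤ c^n * ‖w‖ := by
    intro n
    induction n with
    | zero => exact ⟨by simp [hwdef], hwW, by simp⟩
    | succ n ih =>
      obtain ⟨ih1, ih2, ih3⟩ := ih
      rw [Function.iterate_succ_apply', Function.iterate_succ_apply', ih1]
      refine ⟨?_, hLW _ ih2, ?_⟩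
      · rw [hLlin, hLfix k hkK]
      · calc ‖L (L^[n] w)‖ ≤ c * ‖L^[n] w‖ := hcontr _ ih2
        _ ≤ c * (c^n * ‖w‖) := by
            apply mul_le_mul_of_nonneg_left ih3 hc0
        _ = c^(n+1) * ‖w‖ := by ring
  refine ⟨k, hKfix k hkK, ?_⟩
  have hzero : Tendsto (fun n => L^[n] x - k) atTop (nhds 0) := by
    apply squeeze_zero_norm (a := fun n => c^n * ‖w‖)
    · intro n
      obtain ⟨h1, _, h3⟩ := hiter n
      rw [h1]; simpa using h3
    · rw [show (0:ℝ) = 0 * ‖w‖ by ring]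
      exact (tendsto_pow_atTop_nhds_zero_of_lt_one hc0 hc1).mul_const _
  have := hzero.add (tendsto_const_nhds (x := k))
  simpa using this

/-- matrices to Euclidean space -/
noncomputable def matE (m : ℕ) :
    Matrix (Fin m) (Fin m) ℂ ≃ₗ[ℂ] EuclideanSpace ℂ (Fin m × Fin m) where
  toFun X := WithLp.toLp 2 (fun p : Fin m × Fin m => X p.1 p.2)
  map_add' _ _ := rfl
  map_smul' _ _ := rfl
  invFun v := Matrix.of fun i j => v (i, j)
  left_inv _ := rfl
  right_inv _ := rfl

lemma innerE {m : ℕ} (X Y : Matrix (Fin m) (Fin m) ℂ) :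
    ⟪matE m X, matE m Y⟫ = Matrix.trace (Xᴴ * Y) := by
  have hX : ∀ Z : Matrix (Fin m) (Fin m) ℂ,
      matE m Z = WithLp.toLp 2 (fun p : Fin m × Fin m => Z p.1 p.2) := fun _ => rfl
  rw [hX, hX]
  simp only [matE, LinearEquiv.coe_mk, PiLp.inner_apply, WithLp.ofLp_toLp, RCLike.inner_apply,
    Matrix.trace, Matrix.diag_apply, Matrix.mul_apply, Matrix.conjTranspose_apply,
    starRingEnd_apply]
  rw [Fintype.sum_prod_type, Finset.sum_comm]
  exact Finset.sum_congr rfl fun _ _ => Finset.sum_congr rfl fun _ _ => mul_comm _ _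

lemma smul_half_posSemidef {m : ℕ} {A : Matrix (Fin m) (Fin m) ℂ} (hA : A.PosSemidef) :
    ((2:ℂ)⁻¹ • A).PosSemidef := by
  have h2 : (0:ℂ) ≤ (2:ℂ)⁻¹ := by
    rw [show ((2:ℂ)⁻¹) = (((2:ℝ)⁻¹ : ℝ) : ℂ) by norm_num]
    exact_mod_cast Complex.zero_le_real.mpr (by norm_num)
  constructor
  · show ((2:ℂ)⁻¹ • A)ᴴ = (2:ℂ)⁻¹ • A
    rw [Matrix.conjTranspose_smul, hA.1.eq]
    congr 1
    simp
  · exact (hA.smul h2).2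

/-- Let `T` be invertible, `U := T|T|⁻¹`, and define `T₀ := T`,
`T_{n+1} := (U|Tₙ| + |Tₙ|U)/2`.  Then `(Tₙ)` converges to a normal matrix `N`
with `trace N = trace T`. -/
theorem stmt_8 (m : ℕ) (hm : 1 ≤ m) (T : Matrix (Fin m) (Fin m) ℂ) (hT : IsUnit T.det)
    (U : Matrix (Fin m) (Fin m) ℂ) (hU : U = T * (matrixAbs T)⁻¹)
    (Tseq : ℕ → Matrix (Fin m) (Fin m) ℂ) (h0 : Tseq 0 = T)
    (hrec : ∀ n, Tseq (n + 1) =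
      (2 : ℂ)⁻¹ • (U * matrixAbs (Tseq n) + matrixAbs (Tseq n) * U)) :
    ∃ N : Matrix (Fin m) (Fin m) ℂ,
      Tendsto Tseq atTop (nhds N) ∧ Nᴴ * N = N * Nᴴ ∧
        Matrix.trace N = Matrix.trace T := by
  classical
  have habs_psd : ∀ M : Matrix (Fin m) (Fin m) ℂ, (matrixAbs M).PosSemidef :=
    fun M => matrixAbs_psd M
  have habs_sq : ∀ M : Matrix (Fin m) (Fin m) ℂ, matrixAbs M * matrixAbs M = Mᴴ * M :=
    fun M => matrixAbs_mul_self M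
  have habs_herm : ∀ M : Matrix (Fin m) (Fin m) ℂ, (matrixAbs M)ᴴ = matrixAbs M :=
    fun M => (habs_psd M).isHermitian.eq
  -- |T| is invertible
  have hdetAbs : IsUnit (matrixAbs T).det := by
    have h1 : (matrixAbs T).det * (matrixAbs T).det = (Tᴴ * T).det := by
      rw [← Matrix.det_mul, habs_sq]
    have h2 : IsUnit ((Tᴴ * T).det) := by
      rw [Matrix.det_mul, Matrix.det_conjTranspose]
      exact hT.star.mul hT
    rw [← h1] at h2
    exact isUnit_of_mul_isUnit_left h2
  have hUT : U * matrixAbs T = T := by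
    rw [hU, Matrix.mul_assoc, Matrix.nonsing_inv_mul _ hdetAbs, Matrix.mul_one]
  -- U is unitary
  have hU1 : Uᴴ * U = 1 := by
    rw [hU, Matrix.conjTranspose_mul, Matrix.conjTranspose_nonsing_inv, habs_herm T]
    calc (matrixAbs T)⁻¹ * Tᴴ * (T * (matrixAbs T)⁻¹)
        = (matrixAbs T)⁻¹ * (Tᴴ * T) * (matrixAbs T)⁻¹ := by
          simp only [Matrix.mul_assoc]
    _ = (matrixAbs T)⁻¹ * (matrixAbs T * matrixAbs T) * (matrixAbs T)⁻¹ := by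
          rw [habs_sq]
    _ = 1 := by
          rw [← Matrix.mul_assoc, Matrix.nonsing_inv_mul _ hdetAbs,
            Matrix.one_mul, Matrix.mul_nonsing_inv _ hdetAbs]
  have hU2 : U * Uᴴ = 1 := mul_eq_one_comm.mp hU1
  have huUZ : ∀ Z : Matrix (Fin m) (Fin m) ℂ, U * (Uᴴ * Z) = Z := by
    intro Z; rw [← Matrix.mul_assoc, hU2, Matrix.one_mul]
  have huhUZ : ∀ Z : Matrix (Fin m) (Fin m) ℂ, Uᴴ * (U * Z) = Z := by
    intro Z; rw [← Matrix.mul_assoc, hU1, Matrix.one_mul]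
  -- the recursion for the absolute values
  have hstep : ∀ n, matrixAbs (Tseq (n + 1)) =
      (2:ℂ)⁻¹ • (matrixAbs (Tseq n) + Uᴴ * matrixAbs (Tseq n) * U) := by
    intro n
    set Pn := matrixAbs (Tseq n) with hPn
    have hPnpsd := habs_psd (Tseq n)
    have hPnH : Pnᴴ = Pn := habs_herm (Tseq n)
    set Q := (2:ℂ)⁻¹ • (Pn + Uᴴ * Pn * U) with hQ
    have hQpsd : Q.PosSemidef :=
      smul_half_posSemidef (hPnpsd.add (hPnpsd.conjTranspose_mul_mul_same U))
    have hsq : Q ^ 2 = (Tseq (n+1))ᴴ * (Tseq (n+1)) := by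
      rw [pow_two, hrec n, hQ]
      rw [Matrix.conjTranspose_smul, smul_mul_assoc, smul_mul_assoc, mul_smul_comm,
        mul_smul_comm, smul_smul, smul_smul]
      congr 1
      · simp
      · simp only [Matrix.conjTranspose_add, Matrix.conjTranspose_mul,
          Matrix.conjTranspose_conjTranspose, ← hPn, hPnH]
        simp only [Matrix.add_mul, Matrix.mul_add, Matrix.mul_assoc, huUZ, huhUZ]
    exact (matrixAbs_unique hQpsd hsq).symm
  -- the invariant Tₙ = U * |Tₙ|
  have hUP : ∀ n, Tseq n = U * matrixAbs (Tseq n) := by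
    intro n
    cases n with
    | zero => rw [h0]; exact hUT.symm
    | succ n =>
      rw [hstep n, hrec n, Matrix.mul_smul]
      congr 1
      rw [Matrix.mul_add]
      congr 1
      rw [← Matrix.mul_assoc, ← Matrix.mul_assoc, hU2, Matrix.one_mul]
  -- the trace is constant along the sequence
  have htr : ∀ n, Matrix.trace (Tseq n) = Matrix.trace T := by
    intro n
    induction n with
    | zero => rw [h0]
    | succ n ih =>
      rw [hrec n, Matrix.trace_smul, Matrix.trace_add,
        Matrix.trace_mul_comm (matrixAbs (Tseq n)) U]
      rw [smul_eq_mul]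
      have : Matrix.trace (U * matrixAbs (Tseq n)) = Matrix.trace (Tseq n) := by
        rw [← hUP n]
      rw [this, ih]
      ring
  -- transfer to Euclidean space
  set e := matE m with he
  set Amap : EuclideanSpace ℂ (Fin m × Fin m) →ₗ[ℂ] EuclideanSpace ℂ (Fin m × Fin m) :=
    e.toLinearMap ∘ₗ ((LinearMap.mulRight ℂ U).comp (LinearMap.mulLeft ℂ Uᴴ)) ∘ₗ
      e.symm.toLinearMap with hAmap
  have hAapp : ∀ v, Amap v = e (Uᴴ * (e.symm v) * U) := fun v => rfl
  have hAinner : ∀ v w, ⟪Amap v, Amap w⟫ = ⟪v, w⟫ := by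
    intro v w
    rw [hAapp, hAapp]
    rw [show v = e (e.symm v) from (e.apply_symm_apply v).symm,
      show w = e (e.symm w) from (e.apply_symm_apply w).symm]
    simp only [LinearEquiv.symm_apply_apply]
    set X := e.symm v
    set Y := e.symm w
    rw [innerE, innerE]
    simp only [Matrix.conjTranspose_mul, Matrix.conjTranspose_conjTranspose,
      Matrix.mul_assoc, huUZ]
    rw [Matrix.trace_mul_comm]
    simp only [Matrix.mul_assoc]
    rw [hU2, Matrix.mul_one]
  obtain ⟨y, hAy, hconv⟩ := iter_half_id_add_converge Amap hAinner (e (matrixAbs T))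
  -- iterate identification
  have hlink : ∀ n, matrixAbs (Tseq n) =
      e.symm ((fun z => (2:ℂ)⁻¹ • (z + Amap z))^[n] (e (matrixAbs T))) := by
    intro n
    induction n with
    | zero => rw [h0]; simp
    | succ n ih =>
      rw [Function.iterate_succ_apply', hstep n, ih]
      simp only [_root_.map_smul, _root_.map_add, hAapp, LinearEquiv.symm_apply_apply]
  set Pinf := e.symm y with hPinf
  have hcontsymm : Continuous (e.symm : EuclideanSpace ℂ (Fin m × Fin m) →
      Matrix (Fin m) (Fin m) ℂ) := e.symm.toLinearMap.continuous_of_finiteDimensional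
  have hPconv : Tendsto (fun n => matrixAbs (Tseq n)) atTop (nhds Pinf) := by
    have h := (hcontsymm.tendsto y).comp hconv
    have : (fun n => matrixAbs (Tseq n)) =
        (fun n => e.symm ((fun z => (2:ℂ)⁻¹ • (z + Amap z))^[n] (e (matrixAbs T)))) := by
      funext n; exact hlink n
    rw [this]
    exact h
  -- the limit
  refine ⟨U * Pinf, ?_, ?_, ?_⟩
  · have hcontmul : Continuous (fun X : Matrix (Fin m) (Fin m) ℂ => U * X) :=
      continuous_const.matrix_mul continuous_id
    have h := (hcontmul.tendsto Pinf).comp hPconv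
    have : Tseq = (fun n => U * matrixAbs (Tseq n)) := by funext n; exact hUP n
    rw [this]
    exact h
  · -- normality
    have hfix : Uᴴ * Pinf * U = Pinf := by
      have := congrArg e.symm hAy
      rwa [hAapp, LinearEquiv.symm_apply_apply] at this
    have hPinfH : Pinfᴴ = Pinf := by
      have h1 : Tendsto (fun n => (matrixAbs (Tseq n))ᴴ) atTop (nhds Pinfᴴ) := by
        have hcontct : Continuous (fun X : Matrix (Fin m) (Fin m) ℂ => Xᴴ) :=
          continuous_id.matrix_conjTranspose
        exact (hcontct.tendsto Pinf).comp hPconv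
      have h2 : (fun n => (matrixAbs (Tseq n))ᴴ) = fun n => matrixAbs (Tseq n) := by
        funext n; exact habs_herm (Tseq n)
      rw [h2] at h1
      exact tendsto_nhds_unique h1 hPconv
    have hcomm : U * Pinf = Pinf * U := by
      conv_lhs => rw [← hfix]
      rw [← Matrix.mul_assoc, ← Matrix.mul_assoc, hU2, Matrix.one_mul]
    rw [Matrix.conjTranspose_mul, hPinfH]
    calc (Pinf * Uᴴ) * (U * Pinf) = Pinf * (Uᴴ * (U * Pinf)) := by
          simp only [Matrix.mul_assoc]
    _ = Pinf * Pinf := by rw [huhUZ]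
    _ = (U * Pinf) * (Pinf * Uᴴ) := by
          rw [hcomm, Matrix.mul_assoc, ← Matrix.mul_assoc U, hcomm, Matrix.mul_assoc, hU2,
            Matrix.mul_one]
  · -- trace
    have hconttr : Continuous (fun X : Matrix (Fin m) (Fin m) ℂ => Matrix.trace X) :=
      continuous_id.matrix_trace
    have hcontmul : Continuous (fun X : Matrix (Fin m) (Fin m) ℂ => U * X) :=
      continuous_const.matrix_mul continuous_id
    have h1 : Tendsto (fun n => Matrix.trace (Tseq n)) atTop (nhds (Matrix.trace (U * Pinf))) := by
      have h := ((hconttr.comp hcontmul).tendsto Pinf).comp hPconv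
      have : (fun n => Matrix.trace (Tseq n)) =
          fun n => Matrix.trace (U * matrixAbs (Tseq n)) := by
        funext n; rw [← hUP n]
      rw [this]
      exact h
    have h2 : Tendsto (fun _ : ℕ => Matrix.trace T) atTop (nhds (Matrix.trace T)) :=
      tendsto_const_nhds
    have h3 : (fun n => Matrix.trace (Tseq n)) = fun _ => Matrix.trace T := by
      funext n; exact htr n
    rw [h3] at h1
    exact tendsto_nhds_unique h1 h2
end

section
/- Let m ≥ 1, let U be a unitary m×m complex matrix and let P be any m×m complex matrix. Define S_n := 2^{−n} Σ_{k=0}^{n} binomial(n,k) (U*)^k P U^k for n ≥ 0. Then the sequence (S_n) converges to some matrix P₀, and the limit P₀ commutes with U: U·P₀ = P₀·U. -/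
open Matrix Filter
open scoped ComplexOrder

namespace Stmt9

variable {m : ℕ}

/-- The conjugation map `X ↦ Uᴴ * X * U` as a linear endomorphism. -/
noncomputable def T (U : Matrix (Fin m) (Fin m) ℂ) :
    Module.End ℂ (Matrix (Fin m) (Fin m) ℂ) where
  toFun X := Uᴴ * X * U
  map_add' X Y := by simp [Matrix.mul_add, Matrix.add_mul]
  map_smul' c X := by simp [Matrix.mul_smul, Matrix.smul_mul]

/-- The averaged map `f = (1/2)(T + 1)`. -/
noncomputable def f (U : Matrix (Fin m) (Fin m) ℂ) :
    Module.End ℂ (Matrix (Fin m) (Fin m) ℂ) :=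
  (2 : ℂ)⁻¹ • (T U + 1)

lemma T_apply (U X : Matrix (Fin m) (Fin m) ℂ) : T U X = Uᴴ * X * U := rfl

/-- Frobenius-type sesquilinear form. -/
noncomputable def b (X Y : Matrix (Fin m) (Fin m) ℂ) : ℂ := (Xᴴ * Y).trace

lemma b_T (U : Matrix (Fin m) (Fin m) ℂ) (h2 : U * Uᴴ = 1)
    (X Y : Matrix (Fin m) (Fin m) ℂ) : b (T U X) (T U Y) = b X Y := by
  simp only [b, T_apply, conjTranspose_mul, conjTranspose_conjTranspose]
  rw [show Uᴴ * (Xᴴ * U) * (Uᴴ * Y * U) = Uᴴ * (Xᴴ * (U * Uᴴ) * Y) * U by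
    simp [Matrix.mul_assoc], h2]
  rw [Matrix.trace_mul_cycle, ← Matrix.mul_assoc, h2]
  simp [Matrix.mul_assoc]

lemma b_self_eq_zero {X : Matrix (Fin m) (Fin m) ℂ} (h : b X X = 0) : X = 0 := by
  have key : b X X = ((∑ i, ∑ j, Complex.normSq (X j i) : ℝ) : ℂ) := by
    simp only [b, Matrix.trace, Matrix.diag, Matrix.mul_apply, Matrix.conjTranspose_apply]
    push_cast
    refine Finset.sum_congr rfl fun i _ => Finset.sum_congr rfl fun j _ => ?_
    rw [Complex.normSq_eq_conj_mul_self]; rfl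
  rw [key] at h
  have h0 : (∑ i, ∑ j, Complex.normSq (X j i) : ℝ) = 0 := by exact_mod_cast h
  ext i j
  have := (Finset.sum_eq_zero_iff_of_nonneg (fun i _ =>
    Finset.sum_nonneg fun j _ => Complex.normSq_nonneg _)).1 h0 j (Finset.mem_univ _)
  have := (Finset.sum_eq_zero_iff_of_nonneg
    (fun k _ => Complex.normSq_nonneg _)).1 this i (Finset.mem_univ _)
  simpa using Complex.normSq_eq_zero.1 this

lemma b_self_ne_zero {X : Matrix (Fin m) (Fin m) ℂ} (h : X ≠ 0) : b X X ≠ 0 :=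
  fun hb => h (b_self_eq_zero hb)

lemma b_smul_left (c : ℂ) (X Y : Matrix (Fin m) (Fin m) ℂ) :
    b (c • X) Y = (starRingEnd ℂ) c * b X Y := by
  simp [b, Matrix.smul_mul]

lemma b_smul_right (c : ℂ) (X Y : Matrix (Fin m) (Fin m) ℂ) :
    b X (c • Y) = c * b X Y := by
  simp [b, Matrix.mul_smul]

lemma b_sub_right (X Y Z : Matrix (Fin m) (Fin m) ℂ) :
    b X (Y - Z) = b X Y - b X Z := by
  simp [b, Matrix.mul_sub]

/-- key semisimplicity step: a `T`-fixed vector in the range of `T - 1` is zero. -/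
lemma fixed_in_range (U : Matrix (Fin m) (Fin m) ℂ) (h2 : U * Uᴴ = 1)
    {x z : Matrix (Fin m) (Fin m) ℂ} (hz : z = T U x - x) (hfix : T U z = z) :
    z = 0 := by
  apply b_self_eq_zero
  have h1 : b z (T U x) = b z x := by
    conv_lhs => rw [← hfix]
    rw [b_T U h2]
  rw [hz, b_sub_right, ← hz, h1, sub_self]


lemma T_pow (U : Matrix (Fin m) (Fin m) ℂ) (P : Matrix (Fin m) (Fin m) ℂ) (k : ℕ) :
    ((T U) ^ k) P = (Uᴴ) ^ k * P * U ^ k := by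
  induction k with
  | zero => simp
  | succ k ih =>
    rw [pow_succ', Module.End.mul_apply, ih, T_apply, pow_succ' (Uᴴ), pow_succ U]
    simp [Matrix.mul_assoc]

lemma f_pow_apply (U P : Matrix (Fin m) (Fin m) ℂ) (n : ℕ) :
    ((f U) ^ n) P =
      ((2 : ℂ) ^ n)⁻¹ •
        ∑ k ∈ Finset.range (n + 1), (n.choose k : ℂ) • ((Uᴴ) ^ k * P * U ^ k) := by
  have h1 : (T U + 1) ^ n
      = ∑ k ∈ Finset.range (n + 1),
          (T U) ^ k * ((n.choose k : ℕ) : Module.End ℂ (Matrix (Fin m) (Fin m) ℂ)) := by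
    simpa using (Commute.one_right (T U)).add_pow n
  rw [f, smul_pow, h1, inv_pow]
  rw [LinearMap.smul_apply, LinearMap.coe_sum, Finset.sum_apply]
  congr 1
  refine Finset.sum_congr rfl fun k _ => ?_
  rw [Module.End.mul_apply, Module.End.natCast_apply, map_nsmul, T_pow,
    ← Nat.cast_smul_eq_nsmul ℂ]

lemma f_sub_one_apply (U : Matrix (Fin m) (Fin m) ℂ) (w : Matrix (Fin m) (Fin m) ℂ) :
    (f U - 1) w = (2 : ℂ)⁻¹ • (T U w - w) := by
  simp only [LinearMap.sub_apply, Module.End.one_apply, f, LinearMap.smul_apply,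
    LinearMap.add_apply]
  module

lemma step_semisimple (U : Matrix (Fin m) (Fin m) ℂ) (h2 : U * Uᴴ = 1)
    {x : Matrix (Fin m) (Fin m) ℂ} (h : (f U - 1) ((f U - 1) x) = 0) :
    (f U - 1) x = 0 := by
  set z := T U x - x with hz
  have hx2 : (f U - 1) x = (2 : ℂ)⁻¹ • z := by rw [f_sub_one_apply, hz]
  have hfix : T U z = z := by
    rw [hx2, LinearMap.map_smul, f_sub_one_apply, smul_smul] at h
    have h4 : T U z - z = 0 := by
      have h5 : ((2 : ℂ)⁻¹ * (2 : ℂ)⁻¹) ≠ 0 := by norm_num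
      exact (smul_eq_zero.1 h).resolve_left h5
    rw [sub_eq_zero] at h4
    exact h4
  have hz0 : z = 0 := fixed_in_range U h2 hz hfix
  rw [f_sub_one_apply, ← hz, hz0, smul_zero]

lemma ker_pow_one (U : Matrix (Fin m) (Fin m) ℂ) (h2 : U * Uᴴ = 1) :
    ∀ (k : ℕ) (x : Matrix (Fin m) (Fin m) ℂ), ((f U - 1) ^ k) x = 0 → (f U - 1) x = 0 := by
  intro k
  induction k with
  | zero =>
    intro x hx
    simp only [pow_zero, Module.End.one_apply] at hx
    rw [hx, map_zero]
  | succ k ih =>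
    intro x hx
    rw [pow_succ, Module.End.mul_apply] at hx
    exact step_semisimple U h2 (ih _ hx)

lemma f_apply (U w : Matrix (Fin m) (Fin m) ℂ) :
    f U w = (2 : ℂ)⁻¹ • (T U w + w) := rfl

lemma eigen_normSq (U : Matrix (Fin m) (Fin m) ℂ) (h2 : U * Uᴴ = 1) {μ : ℂ}
    {y : Matrix (Fin m) (Fin m) ℂ} (hy : y ≠ 0) (hfy : f U y = μ • y) :
    Complex.normSq (2 * μ - 1) = 1 := by
  have hTy : T U y = (2 * μ - 1) • y := by
    rw [f_apply] at hfy
    linear_combination (norm := module) (2 : ℂ) • hfy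
  have hb := b_T U h2 y y
  rw [hTy, b_smul_left, b_smul_right, ← mul_assoc] at hb
  have hb1 : (starRingEnd ℂ) (2 * μ - 1) * (2 * μ - 1) = 1 :=
    mul_right_cancel₀ (b_self_ne_zero hy) (by rw [hb, one_mul])
  have := Complex.normSq_eq_conj_mul_self (z := 2 * μ - 1)
  rw [hb1] at this
  exact_mod_cast this

lemma mu_lt_one {μ : ℂ} (hne : μ ≠ 1) (h : Complex.normSq (2 * μ - 1) = 1) :
    ‖μ‖ < 1 := by
  have hre : (2 * μ - 1).re = 2 * μ.re - 1 := by simp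
  have him : (2 * μ - 1).im = 2 * μ.im := by simp
  rw [Complex.normSq_apply, hre, him] at h
  have key : μ.re * μ.re + μ.im * μ.im = μ.re := by nlinarith
  by_contra hge
  have hn1 : (1 : ℝ) ≤ ‖μ‖ := not_lt.1 hge
  have hsq : Complex.normSq μ = ‖μ‖ ^ 2 := by
    rw [Complex.normSq_eq_norm_sq]
  have h1le : (1 : ℝ) ≤ Complex.normSq μ := by nlinarith
  rw [Complex.normSq_apply] at h1le
  have ha : (1 : ℝ) ≤ μ.re := by nlinarith
  have him2 : μ.im * μ.im ≤ 0 := by nlinarith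
  have hb0 : μ.im = 0 := mul_self_eq_zero.1 (le_antisymm him2 (mul_self_nonneg _))
  have h4' : μ.re * μ.re = μ.re := by nlinarith
  have h5 : μ.re * (μ.re - 1) = 0 := by rw [mul_sub, mul_one, h4', sub_self]
  rcases mul_eq_zero.1 h5 with h6 | h6
  · linarith
  · exact hne (Complex.ext (by rw [Complex.one_re]; linarith) (by rw [Complex.one_im]; linarith))

lemma coeff_tendsto_zero {μ : ℂ} (hμ : ‖μ‖ < 1) (j : ℕ) :
    Filter.Tendsto (fun n : ℕ => (n.choose j : ℂ) * μ ^ (n - j)) atTop (nhds 0) := by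
  by_cases h0 : μ = 0
  · have heq : (fun n : ℕ => (n.choose j : ℂ) * μ ^ (n - j)) =ᶠ[atTop] (fun _ => 0) := by
      filter_upwards [eventually_ge_atTop (j + 1)] with n hn
      have : n - j ≠ 0 := by omega
      simp [h0, zero_pow this]
    exact Tendsto.congr' heq.symm tendsto_const_nhds
  · have hr : ‖(‖μ‖ : ℝ)‖ < 1 := by simpa [Real.norm_eq_abs, abs_of_nonneg (norm_nonneg μ)] using hμ
    have hsum := summable_pow_mul_geometric_of_norm_lt_one (R := ℝ) j hr
    have htend : Filter.Tendsto (fun n : ℕ => (n : ℝ) ^ j * ‖μ‖ ^ n) atTop (nhds 0) :=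
      hsum.tendsto_atTop_zero
    have htend2 : Filter.Tendsto
        (fun n : ℕ => (‖μ‖ ^ j)⁻¹ * ((n : ℝ) ^ j * ‖μ‖ ^ n)) atTop (nhds 0) := by
      simpa using htend.const_mul ((‖μ‖ ^ j)⁻¹)
    refine squeeze_zero_norm' ?_ htend2
    filter_upwards [eventually_ge_atTop j] with n hn
    have hμ0 : ‖μ‖ ≠ 0 := norm_ne_zero_iff.2 h0
    rw [norm_mul, norm_pow, Complex.norm_natCast, pow_sub₀ _ hμ0 hn]
    have hch : (n.choose j : ℝ) ≤ (n : ℝ) ^ j := by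
      exact_mod_cast Nat.choose_le_pow n j
    have hpos : (0 : ℝ) ≤ ‖μ‖ ^ n * (‖μ‖ ^ j)⁻¹ := by positivity
    calc (n.choose j : ℝ) * (‖μ‖ ^ n * (‖μ‖ ^ j)⁻¹)
        ≤ (n : ℝ) ^ j * (‖μ‖ ^ n * (‖μ‖ ^ j)⁻¹) := by
          exact mul_le_mul_of_nonneg_right hch hpos
      _ = (‖μ‖ ^ j)⁻¹ * ((n : ℝ) ^ j * ‖μ‖ ^ n) := by ring

lemma tendsto_zero_of_gen (U : Matrix (Fin m) (Fin m) ℂ) {μ : ℂ} (hμ : ‖μ‖ < 1)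
    {x : Matrix (Fin m) (Fin m) ℂ} (k : ℕ)
    (hk : ((f U - μ • 1) ^ k) x = 0) :
    Filter.Tendsto (fun n : ℕ => ((f U) ^ n) x) atTop (nhds 0) := by
  set g := f U - μ • (1 : Module.End ℂ (Matrix (Fin m) (Fin m) ℂ)) with hg
  have hgj : ∀ j, k ≤ j → (g ^ j) x = 0 := by
    intro j hj
    have : g ^ j = g ^ (j - k) * g ^ k := by
      rw [← pow_add]
      congr 1
      omega
    rw [this, Module.End.mul_apply, hk, map_zero]
  have expand : ∀ n : ℕ, ((f U) ^ n) x
      = ∑ j ∈ Finset.range k, ((n.choose j : ℂ) * μ ^ (n - j)) • (g ^ j) x := by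
    intro n
    have hcomm : Commute g (μ • (1 : Module.End ℂ (Matrix (Fin m) (Fin m) ℂ))) :=
      (Commute.one_right g).smul_right μ
    have hfg : f U = g + μ • 1 := by rw [hg, sub_add_cancel]
    have hpow : (f U) ^ n = ∑ j ∈ Finset.range (n + 1),
        g ^ j * (μ • (1 : Module.End ℂ (Matrix (Fin m) (Fin m) ℂ))) ^ (n - j)
          * ((n.choose j : ℕ) : Module.End ℂ (Matrix (Fin m) (Fin m) ℂ)) := by
      rw [hfg]; exact hcomm.add_pow n
    have happ : ∀ j, (g ^ j * (μ • (1 : Module.End ℂ (Matrix (Fin m) (Fin m) ℂ))) ^ (n - j)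
          * ((n.choose j : ℕ) : Module.End ℂ (Matrix (Fin m) (Fin m) ℂ))) x
        = ((n.choose j : ℂ) * μ ^ (n - j)) • (g ^ j) x := by
      intro j
      rw [Module.End.mul_apply, Module.End.mul_apply, Module.End.natCast_apply,
        smul_pow, one_pow, LinearMap.smul_apply, Module.End.one_apply,
        ← Nat.cast_smul_eq_nsmul ℂ, LinearMap.map_smul, LinearMap.map_smul,
        smul_smul, mul_comm]
    have h1 : ((f U) ^ n) x = ∑ j ∈ Finset.range (n + 1),
        ((n.choose j : ℂ) * μ ^ (n - j)) • (g ^ j) x := by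
      rw [hpow, LinearMap.coe_sum, Finset.sum_apply]
      exact Finset.sum_congr rfl fun j _ => happ j
    rw [h1]
    set M := max (n + 1) k with hM
    have e1 : ∑ j ∈ Finset.range (n + 1), ((n.choose j : ℂ) * μ ^ (n - j)) • (g ^ j) x
        = ∑ j ∈ Finset.range M, ((n.choose j : ℂ) * μ ^ (n - j)) • (g ^ j) x := by
      refine Finset.sum_subset (Finset.range_subset_range.2 (le_max_left _ _)) ?_
      intro j _ hj
      rw [Finset.mem_range, not_lt] at hj
      have : n.choose j = 0 := Nat.choose_eq_zero_of_lt (by omega)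
      simp [this]
    have e2 : ∑ j ∈ Finset.range k, ((n.choose j : ℂ) * μ ^ (n - j)) • (g ^ j) x
        = ∑ j ∈ Finset.range M, ((n.choose j : ℂ) * μ ^ (n - j)) • (g ^ j) x := by
      refine Finset.sum_subset (Finset.range_subset_range.2 (le_max_right _ _)) ?_
      intro j _ hj
      rw [Finset.mem_range, not_lt] at hj
      rw [hgj j hj, smul_zero]
    rw [e1, ← e2]
  have : Filter.Tendsto (fun n : ℕ => ∑ j ∈ Finset.range k,
      ((n.choose j : ℂ) * μ ^ (n - j)) • (g ^ j) x) atTop (nhds 0) := by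
    have := tendsto_finset_sum (Finset.range k)
      (fun j _ => ((coeff_tendsto_zero hμ j).smul_const ((g ^ j) x)))
    simpa using this
  exact Tendsto.congr (fun n => (expand n).symm) this

lemma converges_on_gen (U : Matrix (Fin m) (Fin m) ℂ) (h2 : U * Uᴴ = 1) (μ : ℂ)
    (x : Matrix (Fin m) (Fin m) ℂ) (hx : x ∈ Module.End.maxGenEigenspace (f U) μ) :
    ∃ L, Filter.Tendsto (fun n : ℕ => ((f U) ^ n) x) atTop (nhds L) := by
  rw [Module.End.mem_maxGenEigenspace] at hx
  obtain ⟨k, hk⟩ := hx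
  by_cases hx0 : x = 0
  · exact ⟨0, by simp [hx0, map_zero, tendsto_const_nhds]⟩
  by_cases hμ1 : μ = 1
  · subst hμ1
    rw [one_smul] at hk
    have hfix : f U x = x := by
      have := ker_pow_one U h2 k x hk
      rw [LinearMap.sub_apply, Module.End.one_apply, sub_eq_zero] at this
      exact this
    have hall : ∀ n : ℕ, ((f U) ^ n) x = x := by
      intro n
      induction n with
      | zero => simp
      | succ n ih => rw [pow_succ, Module.End.mul_apply, hfix, ih]
    exact ⟨x, Tendsto.congr (fun n => (hall n).symm) tendsto_const_nhds⟩
  · -- μ ≠ 1, get an eigenvector and show ‖μ‖ < 1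
    have hgen : (f U).HasGenEigenvalue μ k := by
      rw [Module.End.hasGenEigenvalue_iff]
      rw [Submodule.ne_bot_iff]
      exact ⟨x, Module.End.mem_genEigenspace_nat.2 hk, hx0⟩
    have heig : (f U).HasEigenvalue μ := Module.End.hasEigenvalue_of_hasGenEigenvalue hgen
    obtain ⟨y, hy⟩ := heig.exists_hasEigenvector
    have hfy : f U y = μ • y := Module.End.mem_eigenspace_iff.1 hy.1
    have hnsq := eigen_normSq U h2 hy.2 hfy
    have hlt := mu_lt_one hμ1 hnsq
    exact ⟨0, tendsto_zero_of_gen U hlt k hk⟩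

end Stmt9

/-- For a unitary `U` and any matrix `P`, the sequence
`Sₙ := 2⁻ⁿ Σ_{k=0}^{n} C(n,k) (U*)ᵏ P Uᵏ` converges to a matrix `P₀` commuting
with `U`. -/
theorem stmt_9 (m : ℕ) (hm : 1 ≤ m) (U : Matrix (Fin m) (Fin m) ℂ)
    (hU : U ∈ Matrix.unitaryGroup (Fin m) ℂ)
    (P : Matrix (Fin m) (Fin m) ℂ) :
    ∃ P₀ : Matrix (Fin m) (Fin m) ℂ,
      Tendsto
        (fun n : ℕ =>
          ((2 : ℂ) ^ n)⁻¹ •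
            ∑ k ∈ Finset.range (n + 1), (n.choose k : ℂ) • ((Uᴴ) ^ k * P * U ^ k))
        atTop (nhds P₀) ∧
      U * P₀ = P₀ * U := by
  have h2 : U * Uᴴ = 1 := by
    have := Matrix.mem_unitaryGroup_iff.1 hU
    rwa [Matrix.star_eq_conjTranspose] at this
  set F := Stmt9.f U with hF
  -- the set of matrices on which the iterates converge is a submodule
  let S : Submodule ℂ (Matrix (Fin m) (Fin m) ℂ) :=
    { carrier := {X | ∃ L, Tendsto (fun n : ℕ => (F ^ n) X) atTop (nhds L)}
      add_mem' := by
        rintro X Y ⟨L1, hL1⟩ ⟨L2, hL2⟩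
        exact ⟨L1 + L2, by simpa [map_add] using hL1.add hL2⟩
      zero_mem' := ⟨0, by simpa [map_zero] using (tendsto_const_nhds :
        Tendsto (fun _ : ℕ => (0 : Matrix (Fin m) (Fin m) ℂ)) atTop _)⟩
      smul_mem' := by
        rintro c X ⟨L, hL⟩
        exact ⟨c • L, by simpa [LinearMap.map_smul] using hL.const_smul c⟩ }
  have hStop : (⊤ : Submodule ℂ (Matrix (Fin m) (Fin m) ℂ)) ≤ S := by
    rw [← Module.End.iSup_maxGenEigenspace_eq_top F]
    exact iSup_le fun μ x hx => Stmt9.converges_on_gen U h2 μ x hx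
  obtain ⟨L, hL⟩ : ∃ L, Tendsto (fun n : ℕ => (F ^ n) P) atTop (nhds L) :=
    hStop (Submodule.mem_top (x := P))
  refine ⟨L, ?_, ?_⟩
  · have : (fun n : ℕ =>
        ((2 : ℂ) ^ n)⁻¹ •
          ∑ k ∈ Finset.range (n + 1), (n.choose k : ℂ) • ((Uᴴ) ^ k * P * U ^ k))
        = fun n : ℕ => (F ^ n) P :=
      funext fun n => (Stmt9.f_pow_apply U P n).symm
    rw [this]
    exact hL
  · have hcont : Continuous F := LinearMap.continuous_of_finiteDimensional F
    have h3 : Tendsto (fun n : ℕ => F ((F ^ n) P)) atTop (nhds (F L)) :=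
      (hcont.tendsto L).comp hL
    have h4 : Tendsto (fun n : ℕ => F ((F ^ n) P)) atTop (nhds L) := by
      have he : (fun n : ℕ => F ((F ^ n) P)) = fun n : ℕ => (F ^ (n + 1)) P :=
        funext fun n => by rw [pow_succ', Module.End.mul_apply]
      rw [he]
      exact hL.comp (tendsto_add_atTop_nat 1)
    have hFL : F L = L := tendsto_nhds_unique h3 h4
    have hTL : Stmt9.T U L = L := by
      rw [hF, Stmt9.f_apply] at hFL
      linear_combination (norm := module) (2 : ℂ) • hFL
    have hTL' : Uᴴ * L * U = L := hTL
    have e : U * (Uᴴ * L * U) = L * U := by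
      rw [← Matrix.mul_assoc, ← Matrix.mul_assoc, h2, Matrix.one_mul]
    rw [hTL'] at e
    exact e
end

section
/- Let λ ∈ (0,1), let b > 0, let p ≥ 0 be a natural number, and let (α_j)_{j≥0} be a sequence of strictly positive real numbers such that α_j = b for all j > p. Then the sequence y_n := ( Σ_{j=0}^{n} binomial(n,j) λ^{n−j} (1−λ)^{j} α_j^{−1} )^{−1} converges to b as n → ∞. -/
open Filter

lemma aux_tendsto (lam : ℝ) (h0 : 0 < lam) (h1 : lam < 1) (j : ℕ) :
    Tendsto (fun n : ℕ => (n.choose j : ℝ) * lam ^ (n - j)) atTop (nhds 0) := by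
  have hs : Summable (fun n : ℕ => (n : ℝ) ^ j * lam ^ n) :=
    summable_pow_mul_geometric_of_norm_lt_one j (by rw [Real.norm_eq_abs, abs_of_pos h0]; exact h1)
  have hs2 : Summable (fun n : ℕ => (n.choose j : ℝ) * lam ^ n) := by
    refine Summable.of_nonneg_of_le (fun n => by positivity) (fun n => ?_) hs
    gcongr
    exact_mod_cast Nat.choose_le_pow n j
  have h2 : Tendsto (fun n : ℕ => (n.choose j : ℝ) * lam ^ n) atTop (nhds 0) :=
    hs2.tendsto_atTop_zero
  have h3 : Tendsto (fun n : ℕ => ((n.choose j : ℝ) * lam ^ n) * (lam ^ j)⁻¹) atTop (nhds (0 * (lam ^ j)⁻¹)) :=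
    h2.mul_const _
  rw [zero_mul] at h3
  refine h3.congr' ?_
  filter_upwards [eventually_ge_atTop j] with n hn
  rw [pow_sub₀ lam h0.ne' hn, mul_assoc]

/-- For `λ ∈ (0,1)`, `b > 0`, and a positive sequence `(α_j)` with
`α_j = b` for all `j > p`, the sequence
`yₙ := (Σ_{j=0}^{n} C(n,j) λ^{n−j} (1−λ)^j α_j⁻¹)⁻¹` converges to `b`. -/
theorem stmt_13 (lam : ℝ) (hlam : lam ∈ Set.Ioo (0 : ℝ) 1)
    (b : ℝ) (hb : 0 < b) (p : ℕ)
    (α : ℕ → ℝ) (hα : ∀ j, 0 < α j) (hαb : ∀ j, p < j → α j = b) :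
    Tendsto
      (fun n : ℕ =>
        (∑ j ∈ Finset.range (n + 1),
          (n.choose j : ℝ) * lam ^ (n - j) * (1 - lam) ^ j * (α j)⁻¹)⁻¹)
      atTop (nhds b) := by
  obtain ⟨h0, h1⟩ := hlam
  -- the modified sum
  set g : ℕ → ℝ := fun n =>
    b⁻¹ + ∑ j ∈ Finset.range (p + 1),
      (n.choose j : ℝ) * lam ^ (n - j) * ((1 - lam) ^ j * ((α j)⁻¹ - b⁻¹)) with hg
  have hsum : ∀ᶠ n in atTop, (∑ j ∈ Finset.range (n + 1),
      (n.choose j : ℝ) * lam ^ (n - j) * (1 - lam) ^ j * (α j)⁻¹) = g n := by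
    filter_upwards [eventually_ge_atTop p] with n hn
    have hone : (∑ j ∈ Finset.range (n + 1),
        (n.choose j : ℝ) * lam ^ (n - j) * (1 - lam) ^ j) = 1 := by
      have := add_pow (1 - lam) lam n
      simp only [sub_add_cancel, one_pow] at this
      exact (Finset.sum_congr rfl fun j _ => by ring).trans this.symm
    have hsplit : ∀ j, (n.choose j : ℝ) * lam ^ (n - j) * (1 - lam) ^ j * (α j)⁻¹
        = (n.choose j : ℝ) * lam ^ (n - j) * (1 - lam) ^ j * b⁻¹
          + (n.choose j : ℝ) * lam ^ (n - j) * ((1 - lam) ^ j * ((α j)⁻¹ - b⁻¹)) := by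
      intro j; ring
    rw [Finset.sum_congr rfl (fun j _ => hsplit j), Finset.sum_add_distrib,
      ← Finset.sum_mul, hone, one_mul, hg]
    congr 1
    refine (Finset.sum_subset ?_ ?_).symm
    · exact Finset.range_subset_range.2 (by omega)
    · intro j hj hj'
      simp only [Finset.mem_range] at hj hj'
      rw [hαb j (by omega)]
      simp
  have hgto : Tendsto g atTop (nhds (b⁻¹ + 0)) := by
    refine Tendsto.add tendsto_const_nhds ?_
    have : Tendsto (fun n : ℕ => ∑ j ∈ Finset.range (p + 1),
        (n.choose j : ℝ) * lam ^ (n - j) * ((1 - lam) ^ j * ((α j)⁻¹ - b⁻¹))) atTop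
        (nhds (∑ j ∈ Finset.range (p + 1), (0 : ℝ))) := by
      refine tendsto_finset_sum _ (fun j _ => ?_)
      have := (aux_tendsto lam h0 h1 j).mul_const ((1 - lam) ^ j * ((α j)⁻¹ - b⁻¹))
      rw [zero_mul] at this
      exact this
    simpa using this
  rw [add_zero] at hgto
  have hS : Tendsto (fun n : ℕ => ∑ j ∈ Finset.range (n + 1),
      (n.choose j : ℝ) * lam ^ (n - j) * (1 - lam) ^ j * (α j)⁻¹) atTop (nhds b⁻¹) :=
    hgto.congr' (hsum.mono fun n h => h.symm)
  have := hS.inv₀ (by positivity)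
  rwa [inv_inv] at this
end

section
/- Let λ ∈ (0,1) and let a, b be distinct strictly positive real numbers. Then there exists a sequence (α_j)_{j≥0} with α_j ∈ {a, b} for all j such that, setting x_n := Σ_{j=0}^{n} binomial(n,j) λ^{n−j} (1−λ)^{j} α_j and y_n := ( Σ_{j=0}^{n} binomial(n,j) λ^{n−j} (1−λ)^{j} α_j^{−1} )^{−1}, there exist strictly increasing sequences of indices (n_k) and (n'_k) such that x_{n_k} → a, y_{n_k} → a, x_{n'_k} → b and y_{n'_k} → b as k → ∞. -/
open Filter

private lemma sumW (lam : ℝ) (n : ℕ) :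
    ∑ j ∈ Finset.range (n+1), (n.choose j : ℝ) * lam ^ (n - j) * (1 - lam) ^ j = 1 := by
  calc ∑ j ∈ Finset.range (n+1), (n.choose j : ℝ) * lam ^ (n-j) * (1-lam) ^ j
      = ∑ j ∈ Finset.range (n+1), (1-lam)^j * lam^(n-j) * (n.choose j : ℝ) := by
        refine Finset.sum_congr rfl fun j _ => by ring
    _ = ((1-lam) + lam)^n := (add_pow _ _ _).symm
    _ = 1 := by norm_num

private lemma varW (lam : ℝ) (n : ℕ) :
    ∑ j ∈ Finset.range (n+1),
      ((n:ℝ)*(1-lam) - j)^2 * ((n.choose j : ℝ) * lam ^ (n-j) * (1-lam) ^ j)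
      = n * (1-lam) * lam := by
  have h := congrArg (Polynomial.eval (1 - lam)) (bernsteinPolynomial.variance (R := ℝ) n)
  simp [bernsteinPolynomial, Polynomial.eval_finset_sum, nsmul_eq_mul] at h
  rw [← h]
  refine Finset.sum_congr rfl fun j _ => by ring

private lemma chebW (lam : ℝ) (h0 : 0 ≤ lam) (h1 : lam ≤ 1) (n : ℕ) (r : ℝ) (hr : 0 < r)
    (T : Finset ℕ) (hT : T ⊆ Finset.range (n+1))
    (hfar : ∀ j ∈ T, r ≤ |(n:ℝ)*(1-lam) - j|) :
    ∑ j ∈ T, (n.choose j : ℝ) * lam ^ (n-j) * (1-lam) ^ j ≤ n*(1-lam)*lam / r^2 := by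
  have hw : ∀ j, 0 ≤ (n.choose j : ℝ) * lam ^ (n-j) * (1-lam) ^ j := by
    intro j
    have : (0:ℝ) ≤ 1 - lam := by linarith
    positivity
  have step1 : ∑ j ∈ T, (n.choose j : ℝ) * lam ^ (n-j) * (1-lam) ^ j
      ≤ ∑ j ∈ T, ((n:ℝ)*(1-lam) - j)^2 * ((n.choose j : ℝ) * lam ^ (n-j) * (1-lam) ^ j) / r^2 := by
    refine Finset.sum_le_sum fun j hj => ?_
    have hf := hfar j hj
    have h2 : r^2 ≤ ((n:ℝ)*(1-lam) - j)^2 := by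
      nlinarith [abs_nonneg ((n:ℝ)*(1-lam) - j), sq_abs ((n:ℝ)*(1-lam) - j)]
    rw [le_div_iff₀ (by positivity)]
    nlinarith [hw j]
  refine step1.trans ?_
  rw [← Finset.sum_div, ← varW lam n]
  refine (div_le_div_iff_of_pos_right (by positivity)).mpr ?_
  refine Finset.sum_le_sum_of_subset_of_nonneg hT fun j _ _ => ?_
  have := hw j
  positivity

private lemma avgW (lam : ℝ) (h0 : 0 ≤ lam) (h1 : lam ≤ 1) (n : ℕ) (r : ℝ) (hr : 0 < r)
    (β : ℕ → ℝ) (v u : ℝ) (hβ : ∀ j, β j = v ∨ β j = u)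
    (hgood : ∀ j, j ∈ Finset.range (n+1) → |(n:ℝ)*(1-lam) - j| < r → β j = v) :
    |∑ j ∈ Finset.range (n+1), (n.choose j : ℝ) * lam ^ (n-j) * (1-lam) ^ j * β j - v|
      ≤ |u - v| * (n*(1-lam)*lam / r^2) := by
  have hw : ∀ j, 0 ≤ (n.choose j : ℝ) * lam ^ (n-j) * (1-lam) ^ j := by
    intro j
    have : (0:ℝ) ≤ 1 - lam := by linarith
    positivity
  have hrw : ∑ j ∈ Finset.range (n+1), (n.choose j : ℝ) * lam ^ (n-j) * (1-lam) ^ j * β j - v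
      = ∑ j ∈ Finset.range (n+1), (n.choose j : ℝ) * lam ^ (n-j) * (1-lam) ^ j * (β j - v) := by
    simp only [mul_sub, Finset.sum_sub_distrib, ← Finset.sum_mul, sumW lam n, one_mul]
  rw [hrw]
  set T := (Finset.range (n+1)).filter (fun j => ¬ (β j = v)) with hT
  calc |∑ j ∈ Finset.range (n+1), (n.choose j : ℝ) * lam ^ (n-j) * (1-lam) ^ j * (β j - v)|
      = |∑ j ∈ T, (n.choose j : ℝ) * lam ^ (n-j) * (1-lam) ^ j * (β j - v)| := by
        rw [Finset.sum_filter_of_ne]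
        intro j _ hne hv
        exact hne (by rw [hv, sub_self, mul_zero])
    _ ≤ ∑ j ∈ T, |(n.choose j : ℝ) * lam ^ (n-j) * (1-lam) ^ j * (β j - v)| :=
        Finset.abs_sum_le_sum_abs _ _
    _ = ∑ j ∈ T, ((n.choose j : ℝ) * lam ^ (n-j) * (1-lam) ^ j) * |u - v| := by
        refine Finset.sum_congr rfl fun j hj => ?_
        have hj' := Finset.mem_filter.mp hj
        have : β j = u := (hβ j).resolve_left hj'.2
        rw [abs_mul, abs_of_nonneg (hw j), this]
    _ = |u - v| * ∑ j ∈ T, (n.choose j : ℝ) * lam ^ (n-j) * (1-lam) ^ j := by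
        rw [← Finset.sum_mul, mul_comm]
    _ ≤ |u - v| * (n*(1-lam)*lam / r^2) := by
        refine mul_le_mul_of_nonneg_left ?_ (abs_nonneg _)
        refine chebW lam h0 h1 n r hr T (Finset.filter_subset _ _) fun j hj => ?_
        by_contra hlt
        push_neg at hlt
        have hj' := Finset.mem_filter.mp hj
        exact hj'.2 (hgood j hj'.1 hlt)

noncomputable def alS (p q : ℝ) (c k : ℕ) : ℕ :=
  max (max ⌈((c:ℝ) + ((k:ℝ)+1)^2)/p⌉₊ ⌈((k:ℝ)+1)/q⌉₊) 1

noncomputable def alC (p q : ℝ) : ℕ → ℕ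
  | 0 => 0
  | k+1 => (alS p q (alC p q k) k)^2 + 1

noncomputable def alN (p q : ℝ) (k : ℕ) : ℕ := (alS p q (alC p q k) k)^2

lemma alS_one (p q : ℝ) (c k : ℕ) : (1:ℝ) ≤ (alS p q c k : ℝ) := by
  have : (1:ℕ) ≤ alS p q c k := le_max_right _ _
  exact_mod_cast this

lemma alS_p (p q : ℝ) (hp : 0 < p) (c k : ℕ) :
    (c:ℝ) + ((k:ℝ)+1)^2 ≤ (alS p q c k : ℝ) * p := by
  have h1 : ((c:ℝ) + ((k:ℝ)+1)^2)/p ≤ (⌈((c:ℝ) + ((k:ℝ)+1)^2)/p⌉₊ : ℝ) := Nat.le_ceil _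
  have h2 : (⌈((c:ℝ) + ((k:ℝ)+1)^2)/p⌉₊ : ℕ) ≤ alS p q c k :=
    le_trans (le_max_left _ _) (le_max_left _ _)
  have h2' : ((⌈((c:ℝ) + ((k:ℝ)+1)^2)/p⌉₊ : ℕ) : ℝ) ≤ (alS p q c k : ℝ) := by exact_mod_cast h2
  rw [div_le_iff₀ hp] at h1
  exact h1.trans (mul_le_mul_of_nonneg_right h2' hp.le)

lemma alS_q (p q : ℝ) (hq : 0 < q) (c k : ℕ) : ((k:ℝ)+1) ≤ (alS p q c k : ℝ) * q := by
  have h1 : ((k:ℝ)+1)/q ≤ (⌈((k:ℝ)+1)/q⌉₊ : ℝ) := Nat.le_ceil _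
  have h2 : (⌈((k:ℝ)+1)/q⌉₊ : ℕ) ≤ alS p q c k :=
    le_trans (le_max_right _ _) (le_max_left _ _)
  have h2' : ((⌈((k:ℝ)+1)/q⌉₊ : ℕ) : ℝ) ≤ (alS p q c k : ℝ) := by exact_mod_cast h2
  rw [div_le_iff₀ hq] at h1
  exact h1.trans (mul_le_mul_of_nonneg_right h2' hq.le)

lemma alN_cast (p q : ℝ) (k : ℕ) : (alN p q k : ℝ) = ((alS p q (alC p q k) k : ℕ) : ℝ)^2 := by
  simp [alN]

lemma alC_succ_cast (p q : ℝ) (k : ℕ) :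
    (alC p q (k+1) : ℝ) = ((alS p q (alC p q k) k : ℕ) : ℝ)^2 + 1 := by
  show (((alS p q (alC p q k) k)^2 + 1 : ℕ) : ℝ) = _
  push_cast; ring

lemma alF1 (p q : ℝ) (hp : 0 < p) (k : ℕ) :
    (alC p q k : ℝ) + ((k:ℝ)+1) * (alS p q (alC p q k) k) ≤ (alN p q k : ℝ) * p := by
  set c := alC p q k
  set s := alS p q c k with hs
  have h1 : (1:ℝ) ≤ (s:ℝ) := alS_one p q c k
  have h2 : (c:ℝ) + ((k:ℝ)+1)^2 ≤ (s:ℝ) * p := alS_p p q hp c k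
  rw [alN_cast]
  have hss : ((alS p q (alC p q k) k : ℕ):ℝ) = (s:ℝ) := rfl
  rw [hss]
  have hc0 : (0:ℝ) ≤ (c:ℝ) := Nat.cast_nonneg c
  have hk0 : (0:ℝ) ≤ (k:ℝ) := Nat.cast_nonneg k
  have hs0 : (0:ℝ) ≤ (s:ℝ) := le_trans zero_le_one h1
  nlinarith [mul_le_mul_of_nonneg_left h2 hs0,
    mul_nonneg (sub_nonneg.mpr h1) hc0,
    mul_nonneg (mul_nonneg hk0 (by linarith : (0:ℝ) ≤ (k:ℝ)+1)) hs0]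

lemma alF2 (p q : ℝ) (hq : 0 < q) (hpq : p + q = 1) (k : ℕ) :
    (alN p q k : ℝ) * p + ((k:ℝ)+1) * (alS p q (alC p q k) k) ≤ (alC p q (k+1) : ℝ) := by
  set c := alC p q k
  set s := alS p q c k with hs
  have h1 : (1:ℝ) ≤ (s:ℝ) := alS_one p q c k
  have h3 : ((k:ℝ)+1) ≤ (s:ℝ) * q := alS_q p q hq c k
  rw [alN_cast, alC_succ_cast]
  have hss : ((alS p q (alC p q k) k : ℕ):ℝ) = (s:ℝ) := rfl
  rw [hss]
  have hp1 : p = 1 - q := by linarith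
  nlinarith [mul_le_mul_of_nonneg_left h3 (le_trans zero_le_one h1)]

lemma alC_lt (p q : ℝ) (hp : 0 < p) (hq : 0 < q) (hpq : p + q = 1) (k : ℕ) :
    alC p q k < alC p q (k+1) := by
  have h1 := alF1 p q hp k
  have hs1 := alS_one p q (alC p q k) k
  have hp1 : p ≤ 1 := by linarith
  have hn0 : (0:ℝ) ≤ (alN p q k : ℝ) := Nat.cast_nonneg _
  have hnp : (alN p q k:ℝ) * p ≤ (alN p q k:ℝ) := by nlinarith
  have hc1 : (alC p q (k+1):ℝ) = (alN p q k : ℝ) + 1 := by rw [alC_succ_cast, alN_cast]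
  have hk0 : (0:ℝ) ≤ (k:ℝ) := Nat.cast_nonneg k
  have : (alC p q k : ℝ) < (alC p q (k+1) : ℝ) := by nlinarith
  exact_mod_cast this

lemma alN_lt (p q : ℝ) (hp : 0 < p) (hq : 0 < q) (hpq : p + q = 1) (k : ℕ) :
    alN p q k < alN p q (k+1) := by
  have h1 := alF1 p q hp (k+1)
  have hc1 : (alC p q (k+1):ℝ) = (alN p q k : ℝ) + 1 := by rw [alC_succ_cast, alN_cast]
  have hs1 := alS_one p q (alC p q (k+1)) (k+1)
  have hp1 : p ≤ 1 := by linarith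
  have hn0 : (0:ℝ) ≤ (alN p q (k+1) : ℝ) := Nat.cast_nonneg _
  have hnp : (alN p q (k+1):ℝ) * p ≤ (alN p q (k+1):ℝ) := by nlinarith
  have hk0 : (0:ℝ) ≤ (k:ℝ) := Nat.cast_nonneg k
  have hks : (0:ℝ) ≤ ((k:ℝ)+1+1) * (alS p q (alC p q (k+1)) (k+1)) := by
    have : (0:ℝ) ≤ (alS p q (alC p q (k+1)) (k+1) : ℝ) := le_trans zero_le_one hs1
    positivity
  have : (alN p q k : ℝ) < (alN p q (k+1) : ℝ) := by
    push_cast at h1 ⊢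
    nlinarith
  exact_mod_cast this

lemma alK (p q : ℝ) (hp : 0 < p) (hq : 0 < q) (hpq : p + q = 1) (k j : ℕ)
    (h1 : alC p q k ≤ j) (h2 : j < alC p q (k+1)) :
    Nat.findGreatest (fun m => alC p q m ≤ j) j = k := by
  have hmono : StrictMono (alC p q) := strictMono_nat_of_lt_succ (alC_lt p q hp hq hpq)
  rw [Nat.findGreatest_eq_iff]
  refine ⟨le_trans hmono.le_apply h1, fun _ => h1, fun n hn _ hcn => ?_⟩
  have : alC p q (k+1) ≤ alC p q n := hmono.monotone hn
  omega

private lemma tends_help (g : ℕ → ℝ) (L C : ℝ) (h : ∀ k, |g k - L| ≤ C / ((k:ℝ)+1)) :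
    Filter.Tendsto g Filter.atTop (nhds L) := by
  rw [tendsto_iff_dist_tendsto_zero]
  refine squeeze_zero (g := fun k : ℕ => C / ((k:ℝ)+1)) (fun k => dist_nonneg)
    (fun k => by rw [Real.dist_eq]; exact h k) ?_
  have h2 := (tendsto_const_div_atTop_nhds_zero_nat C).comp (tendsto_add_atTop_nat 1)
  have : (fun k : ℕ => C / ((k:ℝ)+1)) = (fun n : ℕ => C / (n:ℝ)) ∘ (fun a => a + 1) := by
    funext k; simp [Function.comp]
  rw [this]
  exact h2

/-- For `λ ∈ (0,1)` and distinct positive reals `a, b`, there is a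
sequence `(α_j)` with values in `{a,b}` such that the arithmetic-mean iterates
`xₙ = Σ_{j≤n} C(n,j)λ^{n−j}(1−λ)^j α_j` and the harmonic-mean iterates
`yₙ = (Σ_{j≤n} C(n,j)λ^{n−j}(1−λ)^j α_j⁻¹)⁻¹` have common subsequences converging
to `a`, and common subsequences converging to `b`. -/
theorem stmt_14 (lam : ℝ) (hlam : lam ∈ Set.Ioo (0 : ℝ) 1)
    (a b : ℝ) (ha : 0 < a) (hb : 0 < b) (hab : a ≠ b) :
    ∃ α : ℕ → ℝ, (∀ j, α j = a ∨ α j = b) ∧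
      ∃ nk nk' : ℕ → ℕ, StrictMono nk ∧ StrictMono nk' ∧
        Tendsto
          (fun k : ℕ =>
            ∑ j ∈ Finset.range (nk k + 1),
              ((nk k).choose j : ℝ) * lam ^ (nk k - j) * (1 - lam) ^ j * α j)
          atTop (nhds a) ∧
        Tendsto
          (fun k : ℕ =>
            (∑ j ∈ Finset.range (nk k + 1),
              ((nk k).choose j : ℝ) * lam ^ (nk k - j) * (1 - lam) ^ j * (α j)⁻¹)⁻¹)
          atTop (nhds a) ∧
        Tendsto
          (fun k : ℕ =>
            ∑ j ∈ Finset.range (nk' k + 1),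
              ((nk' k).choose j : ℝ) * lam ^ (nk' k - j) * (1 - lam) ^ j * α j)
          atTop (nhds b) ∧
        Tendsto
          (fun k : ℕ =>
            (∑ j ∈ Finset.range (nk' k + 1),
              ((nk' k).choose j : ℝ) * lam ^ (nk' k - j) * (1 - lam) ^ j * (α j)⁻¹)⁻¹)
          atTop (nhds b) := by
  obtain ⟨hl0, hl1⟩ := hlam
  have hp : 0 < 1 - lam := by linarith
  have hq : 0 < lam := hl0
  have hpq : (1 - lam) + lam = 1 := by ring
  let c : ℕ → ℕ := alC (1 - lam) lam
  let N : ℕ → ℕ := alN (1 - lam) lam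
  let s : ℕ → ℕ := fun k => alS (1 - lam) lam (c k) k
  let K : ℕ → ℕ := fun j => Nat.findGreatest (fun m => c m ≤ j) j
  let α : ℕ → ℝ := fun j => if Even (K j) then a else b
  have hNmono : StrictMono N := strictMono_nat_of_lt_succ (alN_lt _ _ hp hq hpq)
  -- the key estimate
  have main : ∀ (k : ℕ) (f : ℝ → ℝ),
      |∑ j ∈ Finset.range (N k + 1),
          ((N k).choose j : ℝ) * lam ^ (N k - j) * (1 - lam) ^ j * f (α j)
        - f (if Even k then a else b)| ≤ |f b - f a| / ((k:ℝ)+1) := by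
    intro k f
    set v := f (if Even k then a else b) with hv
    set u := f (if Even k then b else a) with hu
    have hs1 : (1:ℝ) ≤ (s k : ℝ) := alS_one _ _ _ _
    set r : ℝ := ((k:ℝ)+1) * (s k) with hr
    have hr0 : 0 < r := by
      have : (0:ℝ) < (s k : ℝ) := lt_of_lt_of_le zero_lt_one hs1
      positivity
    have hβ : ∀ j, f (α j) = v ∨ f (α j) = u := by
      intro j
      by_cases h : Even (K j) <;> by_cases h2 : Even k <;>
        simp [α, hv, hu, h, h2]
    have hgood : ∀ j, j ∈ Finset.range (N k + 1) → |(N k : ℝ)*(1-lam) - j| < r → f (α j) = v := by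
      intro j _ hlt
      have hF1 := alF1 (1-lam) lam hp k
      have hF2 := alF2 (1-lam) lam hq hpq k
      rw [abs_lt] at hlt
      have hckj : c k ≤ j := by
        have : (c k : ℝ) < (j:ℝ) := by
          have := hlt.2
          simp only [hr] at this
          linarith
        have := this.le
        exact_mod_cast this
      have hjc : j < c (k+1) := by
        have : (j:ℝ) < (c (k+1) : ℝ) := by
          have := hlt.1
          simp only [hr] at this
          linarith
        exact_mod_cast this
      have hKj : K j = k := alK (1-lam) lam hp hq hpq k j hckj hjc
      simp only [α, hKj, hv]
    have hbound := avgW lam hq.le hl1.le (N k) r hr0 (fun j => f (α j)) v u hβ hgood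
    refine hbound.trans ?_
    have huv : |u - v| = |f b - f a| := by
      by_cases h2 : Even k
      · simp [hv, hu, h2]
      · simp [hv, hu, h2, abs_sub_comm]
    rw [huv]
    have hNk : (N k : ℝ) = (s k:ℝ)^2 := alN_cast _ _ _
    have hX : (N k : ℝ)*(1-lam)*lam / r^2 ≤ 1/((k:ℝ)+1) := by
      rw [hNk, hr, div_le_div_iff₀ (by positivity) (by positivity)]
      have hk0 : (0:ℝ) ≤ (k:ℝ) := Nat.cast_nonneg k
      nlinarith [sq_nonneg ((s k:ℝ)), mul_pos hp hq, sq_nonneg (1 - 2*lam),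
        mul_nonneg (mul_nonneg hk0 hk0) (sq_nonneg ((s k:ℝ)))]
    calc |f b - f a| * ((N k : ℝ)*(1-lam)*lam / r^2)
        ≤ |f b - f a| * (1/((k:ℝ)+1)) := mul_le_mul_of_nonneg_left hX (abs_nonneg _)
      _ = |f b - f a| / ((k:ℝ)+1) := by ring
  refine ⟨α, fun j => ?_, fun k => N (2*k), fun k => N (2*k+1), ?_, ?_, ?_, ?_, ?_, ?_⟩
  · by_cases h : Even (K j) <;> simp [α, h]
  · exact hNmono.comp fun x y hxy => by omega
  · exact hNmono.comp fun x y hxy => by omega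
  · -- arithmetic, even, → a
    refine tends_help _ a |b - a| fun k => ?_
    have h := main (2*k) id
    simp only [id, even_two_mul, if_pos (even_two_mul k)] at h
    refine h.trans ?_
    refine div_le_div_of_nonneg_left (abs_nonneg _) (by positivity) ?_
    push_cast; linarith [Nat.cast_nonneg (α := ℝ) k]
  · -- harmonic, even, → a
    have hg : Tendsto (fun k : ℕ =>
        ∑ j ∈ Finset.range (N (2*k) + 1),
          ((N (2*k)).choose j : ℝ) * lam ^ (N (2*k) - j) * (1 - lam) ^ j * (α j)⁻¹)
        atTop (nhds a⁻¹) := by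
      refine tends_help _ a⁻¹ |b⁻¹ - a⁻¹| fun k => ?_
      have h := main (2*k) (fun x => x⁻¹)
      simp only [even_two_mul, if_pos (even_two_mul k)] at h
      refine h.trans ?_
      refine div_le_div_of_nonneg_left (abs_nonneg _) (by positivity) ?_
      push_cast; linarith [Nat.cast_nonneg (α := ℝ) k]
    have := hg.inv₀ (inv_ne_zero ha.ne')
    rwa [inv_inv] at this
  · -- arithmetic, odd, → b
    refine tends_help _ b |b - a| fun k => ?_
    have h := main (2*k+1) id
    have hodd : ¬ Even (2*k+1) := by simp [Nat.even_add_one, even_two_mul]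
    simp only [id, if_neg hodd] at h
    refine h.trans ?_
    refine div_le_div_of_nonneg_left (abs_nonneg _) (by positivity) ?_
    push_cast; linarith [Nat.cast_nonneg (α := ℝ) k]
  · -- harmonic, odd, → b
    have hg : Tendsto (fun k : ℕ =>
        ∑ j ∈ Finset.range (N (2*k+1) + 1),
          ((N (2*k+1)).choose j : ℝ) * lam ^ (N (2*k+1) - j) * (1 - lam) ^ j * (α j)⁻¹)
        atTop (nhds b⁻¹) := by
      refine tends_help _ b⁻¹ |b⁻¹ - a⁻¹| fun k => ?_
      have h := main (2*k+1) (fun x => x⁻¹)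
      have hodd : ¬ Even (2*k+1) := by simp [Nat.even_add_one, even_two_mul]
      simp only [if_neg hodd] at h
      refine h.trans ?_
      refine div_le_div_of_nonneg_left (abs_nonneg _) (by positivity) ?_
      push_cast; linarith [Nat.cast_nonneg (α := ℝ) k]
    have := hg.inv₀ (inv_ne_zero hb.ne')
    rwa [inv_inv] at this
end

section
/- Let λ ∈ (0,1) and let g : ℝ_{>0} × ℝ_{>0} → ℝ_{>0} be any function satisfying ((1−λ)s⁻¹ + λt⁻¹)⁻¹ ≤ g(s,t) ≤ (1−λ)s + λt for all s,t > 0. Then there exists a bounded sequence (α_j)_{j≥0} of strictly positive real numbers such that, defining γ_k^{(0)} := α_k and γ_k^{(n)} := g(γ_{k+1}^{(n−1)}, γ_k^{(n−1)}) for n ≥ 1, the sequence (γ_0^{(n)})_{n≥0} does not converge. -/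
open Filter

open Filter Finset

namespace Stmt15

noncomputable def w (p q : ℝ) (n j : ℕ) : ℝ := (n.choose j) * p ^ j * q ^ (n - j)

lemma w_nonneg {p q : ℝ} (hp : 0 ≤ p) (hq : 0 ≤ q) (n j : ℕ) : 0 ≤ w p q n j := by
  unfold w; positivity

lemma sum_w {p q : ℝ} (h : p + q = 1) (n : ℕ) :
    ∑ j ∈ range (n + 1), w p q n j = 1 := by
  have h2 : ∑ j ∈ range (n + 1), w p q n j = (p + q) ^ n := by
    rw [add_pow]
    exact Finset.sum_congr rfl fun j _ => by unfold w; ring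
  rw [h2, h, one_pow]

lemma w_succ_succ (p q : ℝ) (n j : ℕ) :
    w p q (n + 1) (j + 1) = p * w p q n j + q * w p q n (j + 1) := by
  unfold w
  rcases lt_or_ge j n with h | h
  · rw [Nat.choose_succ_succ]
    have h1 : n + 1 - (j + 1) = n - j := by omega
    have h2 : n - (j + 1) + 1 = n - j := by omega
    push_cast
    rw [← h2, pow_succ]
    ring
  · rcases eq_or_lt_of_le h with rfl | h'
    · simp [Nat.choose_succ_succ, Nat.choose_succ_self]
      ring
    · rw [Nat.choose_eq_zero_of_lt (by omega), Nat.choose_eq_zero_of_lt (by omega),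
        Nat.choose_eq_zero_of_lt (by omega)]
      simp

lemma w_self_zero (p q : ℝ) (n : ℕ) : w p q n 0 = q ^ n := by
  unfold w; simp

lemma w_gt (p q : ℝ) {n j : ℕ} (h : n < j) : w p q n j = 0 := by
  unfold w; rw [Nat.choose_eq_zero_of_lt h]; simp

lemma pascal_sum (p q : ℝ) (f : ℕ → ℝ) (n : ℕ) :
    ∑ j ∈ range (n + 2), w p q (n + 1) j * f j
      = p * ∑ j ∈ range (n + 1), w p q n j * f (j + 1)
        + q * ∑ j ∈ range (n + 1), w p q n j * f j := by
  rw [Finset.sum_range_succ' (fun j => w p q (n + 1) j * f j) (n + 1)]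
  have : ∀ j ∈ range (n + 1), w p q (n + 1) (j + 1) * f (j + 1)
      = p * (w p q n j * f (j + 1)) + q * (w p q n (j + 1) * f (j + 1)) := by
    intro j _; rw [w_succ_succ]; ring
  rw [Finset.sum_congr rfl this, Finset.sum_add_distrib, ← Finset.mul_sum, ← Finset.mul_sum]
  have h2 : ∑ j ∈ range (n + 1), w p q n (j + 1) * f (j + 1)
      = ∑ j ∈ range n, w p q n (j + 1) * f (j + 1) := by
    rw [Finset.sum_range_succ, w_gt p q (by omega)]
    simp
  rw [h2, w_self_zero]
  have h3 : q * ∑ j ∈ range (n + 1), w p q n j * f j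
      = q * (∑ j ∈ range n, w p q n (j + 1) * f (j + 1) + w p q n 0 * f 0) := by
    rw [Finset.sum_range_succ' (fun j => w p q n j * f j) n]
  rw [h3, w_self_zero]
  ring

lemma variance_eval {p q : ℝ} (h : p + q = 1) (n : ℕ) :
    ∑ j ∈ range (n + 1), ((n : ℝ) * p - j) ^ 2 * w p q n j = n * p * q := by
  have hv := bernsteinPolynomial.variance ℝ n
  have := congrArg (Polynomial.eval p) hv
  simp only [Polynomial.eval_finset_sum, Polynomial.eval_mul, Polynomial.eval_pow,
    Polynomial.eval_sub, Polynomial.eval_natCast, Polynomial.eval_smul,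
    Polynomial.eval_X, Polynomial.eval_one, bernsteinPolynomial,
    nsmul_eq_mul, smul_eq_mul] at this
  have hq : (1 : ℝ) - p = q := by linarith
  rw [hq] at this
  rw [← this]
  apply Finset.sum_congr rfl
  intro j hj
  unfold w
  ring

lemma chebyshev {p q : ℝ} (hp : 0 ≤ p) (hq : 0 ≤ q) (h : p + q = 1) (n : ℕ)
    {δ : ℝ} (hδ : 0 < δ) :
    ∑ j ∈ (range (n + 1)).filter (fun j : ℕ => δ ≤ |(j : ℝ) - (n : ℝ) * p|), w p q n j
      ≤ n * p * q / δ ^ 2 := by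
  rw [le_div_iff₀ (by positivity), ← variance_eval h n]
  calc (∑ j ∈ (range (n + 1)).filter (fun j : ℕ => δ ≤ |(j : ℝ) - (n : ℝ) * p|), w p q n j) * δ ^ 2
      = ∑ j ∈ (range (n + 1)).filter (fun j : ℕ => δ ≤ |(j : ℝ) - (n : ℝ) * p|), δ ^ 2 * w p q n j := by
        rw [Finset.sum_mul]
        exact Finset.sum_congr rfl fun j _ => by ring
    _ ≤ ∑ j ∈ (range (n + 1)).filter (fun j : ℕ => δ ≤ |(j : ℝ) - (n : ℝ) * p|),
          ((n : ℝ) * p - j) ^ 2 * w p q n j := by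
        apply Finset.sum_le_sum
        intro j hj
        have hj2 := (Finset.mem_filter.mp hj).2
        have : δ ^ 2 ≤ ((n : ℝ) * p - j) ^ 2 := by
          have h1 : |(j : ℝ) - n * p| ^ 2 = ((n : ℝ) * p - j) ^ 2 := by
            rw [sq_abs]; ring
          rw [← h1]
          exact pow_le_pow_left₀ hδ.le hj2 2
        exact mul_le_mul_of_nonneg_right this (w_nonneg hp hq n j)
    _ ≤ ∑ j ∈ range (n + 1), ((n : ℝ) * p - j) ^ 2 * w p q n j := by
        apply Finset.sum_le_sum_of_subset_of_nonneg (Finset.filter_subset _ _)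
        intro j _ _
        exact mul_nonneg (sq_nonneg _) (w_nonneg hp hq n j)


section Iter

variable {lam : ℝ} {g : ℝ → ℝ → ℝ} {α : ℕ → ℝ} {γ : ℕ → ℕ → ℝ}

lemma gamma_pos (hlam : lam ∈ Set.Ioo (0 : ℝ) 1)
    (hg : ∀ s t : ℝ, 0 < s → 0 < t →
      ((1 - lam) * s⁻¹ + lam * t⁻¹)⁻¹ ≤ g s t ∧ g s t ≤ (1 - lam) * s + lam * t)
    (hα : ∀ j, 0 < α j)
    (h0 : ∀ k, γ 0 k = α k)
    (hrec : ∀ n k, γ (n + 1) k = g (γ n (k + 1)) (γ n k)) :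
    ∀ n k, 0 < γ n k := by
  obtain ⟨hl0, hl1⟩ := hlam
  intro n
  induction n with
  | zero => intro k; rw [h0]; exact hα k
  | succ n ih =>
    intro k
    have h1 := ih (k + 1)
    have h2 := ih k
    have hlow := (hg _ _ h1 h2).1
    rw [hrec]
    refine lt_of_lt_of_le ?_ hlow
    have hden : 0 < (1 - lam) * (γ n (k + 1))⁻¹ + lam * (γ n k)⁻¹ :=
      add_pos (mul_pos (by linarith) (inv_pos.mpr h1)) (mul_pos hl0 (inv_pos.mpr h2))
    exact inv_pos.mpr hden

lemma gamma_upper (hlam : lam ∈ Set.Ioo (0 : ℝ) 1)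
    (hg : ∀ s t : ℝ, 0 < s → 0 < t →
      ((1 - lam) * s⁻¹ + lam * t⁻¹)⁻¹ ≤ g s t ∧ g s t ≤ (1 - lam) * s + lam * t)
    (hα : ∀ j, 0 < α j)
    (h0 : ∀ k, γ 0 k = α k)
    (hrec : ∀ n k, γ (n + 1) k = g (γ n (k + 1)) (γ n k)) :
    ∀ n k, γ n k ≤ ∑ j ∈ range (n + 1), w (1 - lam) lam n j * α (k + j) := by
  obtain ⟨hl0, hl1⟩ := hlam
  have hpos := gamma_pos ⟨hl0, hl1⟩ hg hα h0 hrec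
  intro n
  induction n with
  | zero => intro k; simp [h0, w]
  | succ n ih =>
    intro k
    rw [hrec, pascal_sum]
    have step := (hg _ _ (hpos n (k + 1)) (hpos n k)).2
    refine le_trans step (add_le_add ?_ ?_)
    · refine mul_le_mul_of_nonneg_left ?_ (by linarith)
      refine le_trans (ih (k + 1)) (le_of_eq ?_)
      exact Finset.sum_congr rfl fun j _ => by rw [show k + 1 + j = k + (j + 1) by omega]
    · exact mul_le_mul_of_nonneg_left (ih k) (by linarith)

lemma gamma_lower (hlam : lam ∈ Set.Ioo (0 : ℝ) 1)
    (hg : ∀ s t : ℝ, 0 < s → 0 < t →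
      ((1 - lam) * s⁻¹ + lam * t⁻¹)⁻¹ ≤ g s t ∧ g s t ≤ (1 - lam) * s + lam * t)
    (hα : ∀ j, 0 < α j)
    (h0 : ∀ k, γ 0 k = α k)
    (hrec : ∀ n k, γ (n + 1) k = g (γ n (k + 1)) (γ n k)) :
    ∀ n k, (γ n k)⁻¹ ≤ ∑ j ∈ range (n + 1), w (1 - lam) lam n j * (α (k + j))⁻¹ := by
  obtain ⟨hl0, hl1⟩ := hlam
  have hpos := gamma_pos ⟨hl0, hl1⟩ hg hα h0 hrec
  intro n
  induction n with
  | zero => intro k; simp [h0, w]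
  | succ n ih =>
    intro k
    rw [hrec, pascal_sum]
    have h1 := hpos n (k + 1)
    have h2 := hpos n k
    have hlow := (hg _ _ h1 h2).1
    have hden : 0 < (1 - lam) * (γ n (k + 1))⁻¹ + lam * (γ n k)⁻¹ :=
      add_pos (mul_pos (by linarith) (inv_pos.mpr h1)) (mul_pos hl0 (inv_pos.mpr h2))
    have hstep : (g (γ n (k + 1)) (γ n k))⁻¹
        ≤ (1 - lam) * (γ n (k + 1))⁻¹ + lam * (γ n k)⁻¹ := by
      rw [← inv_inv ((1 - lam) * (γ n (k + 1))⁻¹ + lam * (γ n k)⁻¹)]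
      exact inv_anti₀ (inv_pos.mpr hden) hlow
    refine le_trans hstep (add_le_add ?_ ?_)
    · refine mul_le_mul_of_nonneg_left ?_ (by linarith)
      refine le_trans (ih (k + 1)) (le_of_eq ?_)
      exact Finset.sum_congr rfl fun j _ => by rw [show k + 1 + j = k + (j + 1) by omega]
    · exact mul_le_mul_of_nonneg_left (ih k) (by linarith)

end Iter

section Construction

open Classical in
/-- Base block size. -/
noncomputable def NN (p : ℝ) : ℕ := ⌈101 / p⌉₊

noncomputable def nn (p : ℝ) (m : ℕ) : ℕ := NN p * 4 ^ m

noncomputable def dd (p q : ℝ) (m : ℕ) : ℝ := 10 * Real.sqrt ((nn p m : ℝ) * (p * q))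

noncomputable def tt (p q : ℝ) (m : ℕ) : ℝ := p * (nn p m : ℝ) + dd p q m

open Classical in
noncomputable def alph (p q : ℝ) (j : ℕ) : ℝ :=
  if Even ((range (j + 1)).filter (fun m => tt p q m ≤ (j : ℝ))).card then 1 else 2

variable {p q : ℝ}

lemma NN_pos (hp : 0 < p) : 0 < NN p := by
  have : (0 : ℝ) < 101 / p := by positivity
  exact Nat.ceil_pos.mpr this

lemma p_NN (hp : 0 < p) : (101 : ℝ) ≤ p * (NN p : ℝ) := by
  have h := Nat.le_ceil (101 / p)
  calc (101 : ℝ) = p * (101 / p) := by field_simp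
    _ ≤ p * (NN p : ℝ) := by
        exact mul_le_mul_of_nonneg_left h hp.le

lemma nn_cast (m : ℕ) : (nn p m : ℝ) = (NN p : ℝ) * 4 ^ m := by
  unfold nn; push_cast; ring

lemma p_nn (hp : 0 < p) (m : ℕ) : 101 * 4 ^ m ≤ p * (nn p m : ℝ) := by
  rw [nn_cast, ← mul_assoc]
  have h4 : (0 : ℝ) ≤ 4 ^ m := by positivity
  exact mul_le_mul_of_nonneg_right (p_NN hp) h4

lemma nn_pos_real (hp : 0 < p) (m : ℕ) : (0 : ℝ) < (nn p m : ℝ) := by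
  have := p_nn hp m
  nlinarith [pow_pos (show (0:ℝ) < 4 by norm_num) m]

lemma dd_pos (hp : 0 < p) (hq : 0 < q) (m : ℕ) : 0 < dd p q m := by
  unfold dd
  have h := nn_pos_real hp m
  have : 0 < (nn p m : ℝ) * (p * q) := by positivity
  have := Real.sqrt_pos.mpr this
  linarith

lemma dd_sq (hp : 0 < p) (hq : 0 < q) (m : ℕ) :
    dd p q m ^ 2 = 100 * ((nn p m : ℝ) * (p * q)) := by
  unfold dd
  have h := nn_pos_real hp m
  rw [mul_pow, Real.sq_sqrt (by positivity)]
  norm_num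

lemma dd_succ (hp : 0 < p) (hq : 0 < q) (m : ℕ) : dd p q (m + 1) = 2 * dd p q m := by
  unfold dd
  have h : ((nn p (m + 1) : ℝ)) * (p * q) = 2 ^ 2 * ((nn p m : ℝ) * (p * q)) := by
    rw [nn_cast, nn_cast, pow_succ]
    ring
  rw [h, Real.sqrt_mul (by norm_num), Real.sqrt_sq (by norm_num)]
  ring

lemma sep (hp : 0 < p) (hq : 0 < q) (hpq : p + q = 1) (m : ℕ) :
    tt p q m < p * (nn p (m + 1) : ℝ) - dd p q (m + 1) := by
  unfold tt
  rw [dd_succ hp hq]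
  have h4 : p * (nn p (m + 1) : ℝ) = 4 * (p * (nn p m : ℝ)) := by
    rw [nn_cast, nn_cast, pow_succ]; ring
  rw [h4]
  set x := p * (nn p m : ℝ) with hx
  set a := dd p q m with ha
  have hxge : (101 : ℝ) ≤ x := by
    have := p_nn hp m
    have h1 : (1 : ℝ) ≤ 4 ^ m := one_le_pow₀ (by norm_num)
    nlinarith
  have ha0 : 0 ≤ a := (dd_pos hp hq m).le
  have ha2 : a ^ 2 = 100 * q * x := by
    rw [ha, dd_sq hp hq]; rw [hx]; ring
  have hq1 : q < 1 := by linarith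
  nlinarith [sq_nonneg (x - a)]

lemma tt_strictMono (hp : 0 < p) (hq : 0 < q) (hpq : p + q = 1) :
    StrictMono (tt p q) := by
  apply strictMono_nat_of_lt_succ
  intro m
  have h1 := sep hp hq hpq m
  have h2 := dd_pos hp hq (m + 1)
  unfold tt
  unfold tt at h1
  linarith

lemma tt_lt_of_lt (hp : 0 < p) (hq : 0 < q) (hpq : p + q = 1) {m' m : ℕ} (h : m' < m) :
    tt p q m' < p * (nn p m : ℝ) - dd p q m := by
  have h1 : tt p q m' ≤ tt p q (m - 1) :=
    (tt_strictMono hp hq hpq).monotone (by omega)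
  have h2 := sep hp hq hpq (m - 1)
  rw [show m - 1 + 1 = m by omega] at h2
  linarith

lemma self_lt_tt (hp : 0 < p) (hq : 0 < q) (m : ℕ) : (m : ℝ) < tt p q m := by
  have h1 := p_nn hp m
  have h2 := (dd_pos hp hq m).le
  have h3 : (m : ℝ) < 4 ^ m := by
    have : m < 4 ^ m := Nat.lt_pow_self (by norm_num)
    calc (m : ℝ) < ((4 ^ m : ℕ) : ℝ) := by exact_mod_cast this
      _ = 4 ^ m := by push_cast; ring
  unfold tt
  nlinarith [pow_pos (show (0:ℝ) < 4 by norm_num) m]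

open Classical in
lemma window_card (hp : 0 < p) (hq : 0 < q) (hpq : p + q = 1) {m j : ℕ}
    (hj : |(j : ℝ) - p * (nn p m : ℝ)| < dd p q m) :
    ((range (j + 1)).filter (fun m' => tt p q m' ≤ (j : ℝ))).card = m := by
  have habs := abs_lt.mp hj
  have hfe : (range (j + 1)).filter (fun m' => tt p q m' ≤ (j : ℝ)) = range m := by
    ext m'
    simp only [Finset.mem_filter, Finset.mem_range]
    constructor
    · rintro ⟨h1, h2⟩
      by_contra hc
      push_neg at hc
      have : tt p q m ≤ tt p q m' := (tt_strictMono hp hq hpq).monotone hc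
      have : p * (nn p m : ℝ) + dd p q m ≤ (j : ℝ) := le_trans (by unfold tt at this ⊢; exact this) h2
      linarith
    · intro h
      have h2 : tt p q m' < p * (nn p m : ℝ) - dd p q m := tt_lt_of_lt hp hq hpq h
      have h3 : tt p q m' ≤ (j : ℝ) := by linarith
      refine ⟨?_, h3⟩
      have := self_lt_tt hp hq m'
      have : (m' : ℝ) < (j : ℝ) := by linarith
      exact_mod_cast lt_trans (by exact_mod_cast this) (by exact_mod_cast Nat.lt_succ_self j)
  rw [hfe, Finset.card_range]

lemma alph_pos (p q : ℝ) (j : ℕ) : 0 < alph p q j := by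
  unfold alph; split <;> norm_num

lemma alph_le_two (p q : ℝ) (j : ℕ) : alph p q j ≤ 2 := by
  unfold alph; split <;> norm_num

lemma one_le_alph (p q : ℝ) (j : ℕ) : 1 ≤ alph p q j := by
  unfold alph; split <;> norm_num

lemma alph_window_even (hp : 0 < p) (hq : 0 < q) (hpq : p + q = 1) {m j : ℕ}
    (hm : Even m) (hj : |(j : ℝ) - p * (nn p m : ℝ)| < dd p q m) :
    alph p q j = 1 := by
  unfold alph
  rw [window_card hp hq hpq hj]
  simp [hm]

lemma alph_window_odd (hp : 0 < p) (hq : 0 < q) (hpq : p + q = 1) {m j : ℕ}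
    (hm : ¬ Even m) (hj : |(j : ℝ) - p * (nn p m : ℝ)| < dd p q m) :
    alph p q j = 2 := by
  unfold alph
  rw [window_card hp hq hpq hj]
  simp [hm]

open Classical in
lemma mass_out (hp : 0 < p) (hq : 0 < q) (hpq : p + q = 1) (m : ℕ) :
    ∑ j ∈ (range (nn p m + 1)).filter
        (fun j : ℕ => dd p q m ≤ |(j : ℝ) - (nn p m : ℝ) * p|), w p q (nn p m) j
      ≤ 1 / 100 := by
  have h := chebyshev hp.le hq.le hpq (nn p m) (dd_pos hp hq m)
  have hnn := nn_pos_real hp m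
  have he : ((nn p m : ℝ)) * p * q / dd p q m ^ 2 = 1 / 100 := by
    rw [dd_sq hp hq]
    field_simp
  rwa [he] at h

open Classical in
lemma sum_alph_even (hp : 0 < p) (hq : 0 < q) (hpq : p + q = 1) {m : ℕ} (hm : Even m) :
    ∑ j ∈ range (nn p m + 1), w p q (nn p m) j * alph p q j ≤ 51 / 50 := by
  set n := nn p m with hn
  set P : ℕ → Prop := fun j => dd p q m ≤ |(j : ℝ) - (n : ℝ) * p| with hP
  rw [← Finset.sum_filter_add_sum_filter_not (range (n + 1)) P]
  have hout : ∑ j ∈ (range (n + 1)).filter P, w p q n j * alph p q j ≤ 2 * (1 / 100) := by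
    calc ∑ j ∈ (range (n + 1)).filter P, w p q n j * alph p q j
        ≤ ∑ j ∈ (range (n + 1)).filter P, w p q n j * 2 := by
          exact Finset.sum_le_sum fun j _ =>
            mul_le_mul_of_nonneg_left (alph_le_two p q j) (w_nonneg hp.le hq.le n j)
      _ = 2 * ∑ j ∈ (range (n + 1)).filter P, w p q n j := by
          rw [Finset.mul_sum]; exact Finset.sum_congr rfl fun j _ => by ring
      _ ≤ 2 * (1 / 100) := by
          have := mass_out hp hq hpq m
          linarith
  have hin : ∑ j ∈ (range (n + 1)).filter (fun j => ¬ P j), w p q n j * alph p q j ≤ 1 := by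
    calc ∑ j ∈ (range (n + 1)).filter (fun j => ¬ P j), w p q n j * alph p q j
        = ∑ j ∈ (range (n + 1)).filter (fun j => ¬ P j), w p q n j := by
          apply Finset.sum_congr rfl
          intro j hj
          have hj2 := (Finset.mem_filter.mp hj).2
          have hwin : |(j : ℝ) - p * (n : ℝ)| < dd p q m := by
            rw [hP] at hj2
            rw [mul_comm]
            exact lt_of_not_ge hj2
          rw [alph_window_even hp hq hpq hm hwin, mul_one]
      _ ≤ ∑ j ∈ range (n + 1), w p q n j :=
          Finset.sum_le_sum_of_subset_of_nonneg (Finset.filter_subset _ _)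
            (fun j _ _ => w_nonneg hp.le hq.le n j)
      _ = 1 := sum_w hpq n
  linarith

open Classical in
lemma sum_alphinv_odd (hp : 0 < p) (hq : 0 < q) (hpq : p + q = 1) {m : ℕ} (hm : ¬ Even m) :
    ∑ j ∈ range (nn p m + 1), w p q (nn p m) j * (alph p q j)⁻¹ ≤ 51 / 100 := by
  set n := nn p m with hn
  set P : ℕ → Prop := fun j => dd p q m ≤ |(j : ℝ) - (n : ℝ) * p| with hP
  rw [← Finset.sum_filter_add_sum_filter_not (range (n + 1)) P]
  have hout : ∑ j ∈ (range (n + 1)).filter P, w p q n j * (alph p q j)⁻¹ ≤ 1 / 100 := by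
    calc ∑ j ∈ (range (n + 1)).filter P, w p q n j * (alph p q j)⁻¹
        ≤ ∑ j ∈ (range (n + 1)).filter P, w p q n j * 1 := by
          refine Finset.sum_le_sum fun j _ => ?_
          refine mul_le_mul_of_nonneg_left ?_ (w_nonneg hp.le hq.le n j)
          rw [← inv_one]
          exact inv_anti₀ (by norm_num) (one_le_alph p q j)
      _ = ∑ j ∈ (range (n + 1)).filter P, w p q n j := by
          exact Finset.sum_congr rfl fun j _ => by ring
      _ ≤ 1 / 100 := mass_out hp hq hpq m
  have hin : ∑ j ∈ (range (n + 1)).filter (fun j => ¬ P j), w p q n j * (alph p q j)⁻¹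
      ≤ 1 / 2 := by
    calc ∑ j ∈ (range (n + 1)).filter (fun j => ¬ P j), w p q n j * (alph p q j)⁻¹
        = ∑ j ∈ (range (n + 1)).filter (fun j => ¬ P j), w p q n j * (1 / 2) := by
          apply Finset.sum_congr rfl
          intro j hj
          have hj2 := (Finset.mem_filter.mp hj).2
          have hwin : |(j : ℝ) - p * (n : ℝ)| < dd p q m := by
            rw [hP] at hj2
            rw [mul_comm]
            exact lt_of_not_ge hj2
          rw [alph_window_odd hp hq hpq hm hwin]
          norm_num
      _ ≤ ∑ j ∈ range (n + 1), w p q n j * (1 / 2) := by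
          refine Finset.sum_le_sum_of_subset_of_nonneg (Finset.filter_subset _ _) ?_
          intro j _ _
          have := w_nonneg hp.le hq.le n j
          positivity
      _ = 1 / 2 := by
          rw [← Finset.sum_mul, sum_w hpq n]
          norm_num
  linarith

end Construction

end Stmt15

open Stmt15

/-- Let `λ ∈ (0,1)` and let `g` satisfy the sandwich condition
`((1−λ)s⁻¹ + λt⁻¹)⁻¹ ≤ g(s,t) ≤ (1−λ)s + λt` for all `s,t > 0`.  Then there is a
bounded sequence `(α_j)` of positive reals such that the iteration
`γ_k⁽⁰⁾ = α_k`, `γ_k⁽ⁿ⁾ = g(γ_{k+1}⁽ⁿ⁻¹⁾, γ_k⁽ⁿ⁻¹⁾)` produces a non-convergent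
sequence `(γ₀⁽ⁿ⁾)ₙ`. -/
theorem stmt_15 (lam : ℝ) (hlam : lam ∈ Set.Ioo (0 : ℝ) 1)
    (g : ℝ → ℝ → ℝ)
    (hg : ∀ s t : ℝ, 0 < s → 0 < t →
      ((1 - lam) * s⁻¹ + lam * t⁻¹)⁻¹ ≤ g s t ∧ g s t ≤ (1 - lam) * s + lam * t) :
    ∃ α : ℕ → ℝ, (∀ j, 0 < α j) ∧ BddAbove (Set.range α) ∧
      ∀ γ : ℕ → ℕ → ℝ,
        (∀ k, γ 0 k = α k) →
        (∀ n k, γ (n + 1) k = g (γ n (k + 1)) (γ n k)) →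
        ¬ ∃ L : ℝ, Tendsto (fun n : ℕ => γ n 0) atTop (nhds L) := by
  obtain ⟨hl0, hl1⟩ := hlam
  have hp : 0 < 1 - lam := by linarith
  have hpq : (1 - lam) + lam = 1 := by ring
  refine ⟨alph (1 - lam) lam, alph_pos _ _, ⟨2, ?_⟩, ?_⟩
  · rintro x ⟨j, rfl⟩
    exact alph_le_two _ _ j
  · intro γ h0 hrec hcon
    obtain ⟨L, hL⟩ := hcon
    have hαpos : ∀ j, 0 < alph (1 - lam) lam j := alph_pos _ _
    have hpos := gamma_pos ⟨hl0, hl1⟩ hg hαpos h0 hrec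
    have hupper := gamma_upper ⟨hl0, hl1⟩ hg hαpos h0 hrec
    have hlower := gamma_lower ⟨hl0, hl1⟩ hg hαpos h0 hrec
    -- the two subsequence bounds
    have heven : ∀ m : ℕ, Even m → γ (nn (1 - lam) m) 0 ≤ 51 / 50 := by
      intro m hm
      have h1 := hupper (nn (1 - lam) m) 0
      simp only [zero_add] at h1
      exact le_trans h1 (sum_alph_even hp hl0 hpq hm)
    have hodd : ∀ m : ℕ, ¬ Even m → 100 / 51 ≤ γ (nn (1 - lam) m) 0 := by
      intro m hm
      have h1 := hlower (nn (1 - lam) m) 0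
      simp only [zero_add] at h1
      have h2 : (γ (nn (1 - lam) m) 0)⁻¹ ≤ 51 / 100 :=
        le_trans h1 (sum_alphinv_odd hp hl0 hpq hm)
      have h3 := inv_anti₀ (inv_pos.mpr (hpos _ 0)) h2
      rw [inv_inv] at h3
      calc (100 : ℝ) / 51 = (51 / 100 : ℝ)⁻¹ := by norm_num
        _ ≤ γ (nn (1 - lam) m) 0 := h3
    have hnnmono : StrictMono (nn (1 - lam)) := by
      intro a b h
      unfold nn
      have h4 : (4 : ℕ) ^ a < 4 ^ b := Nat.pow_lt_pow_right (by norm_num) h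
      exact Nat.mul_lt_mul_of_le_of_lt (le_refl _) h4 (NN_pos hp)
    have hLle : L ≤ 51 / 50 := by
      have hφ : StrictMono (fun i : ℕ => nn (1 - lam) (2 * i)) := by
        intro a b h
        exact hnnmono (by omega)
      have ht : Tendsto (fun i : ℕ => γ (nn (1 - lam) (2 * i)) 0) atTop (nhds L) :=
        hL.comp hφ.tendsto_atTop
      exact le_of_tendsto ht (Eventually.of_forall fun i => heven _ (even_two_mul i))
    have hLge : 100 / 51 ≤ L := by
      have hφ : StrictMono (fun i : ℕ => nn (1 - lam) (2 * i + 1)) := by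
        intro a b h
        exact hnnmono (by omega)
      have ht : Tendsto (fun i : ℕ => γ (nn (1 - lam) (2 * i + 1)) 0) atTop (nhds L) :=
        hL.comp hφ.tendsto_atTop
      refine ge_of_tendsto ht (Eventually.of_forall fun i => hodd _ ?_)
      simp [Nat.even_add_one, parity_simps]
    have : (51 : ℝ) / 50 < 100 / 51 := by norm_num
    linarith
end
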